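/- arXiv:2506.05478 — 9 statements merged into one kernel-verified Lean document; each statement's English description precedes it below -/
import Mathlib

section
/- Let d be a prime, let n ≥ 1, let Γ be a symmetric n×n matrix over ZMod d with zero diagonal, let ω : ℂ be a primitive d-th root of unity (with ω^k for k : ZMod d meaning ω^(k.val)), and let ψ_Γ : (Fin n → ZMod d) → ℂ be the graph-state amplitude function ψ_Γ(x) = (d:ℝ)^(−n/2) · ω^(Σ_{u<v} Γ u v · x u · x v). Then for every w : Fin n and every nonzero γ : ZMod d, the γ-local scaling of Γ about w satisfies, for all x : Fin n → ZMod d, ψ_{Γ ∘_γ w}(x) = ψ_Γ(x'), where x' agrees with x except x'(w) = γ · x(w). (Equivalently, |G ∘_γ w⟩ = M_w(γ⁻¹)|G⟩ where M(γ)|k⟩ = |γk⟩.) -/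
/-- The graph-state amplitude function of an adjacency matrix `Γ` over `ZMod d`:
`ψ_Γ(x) = d^(-n/2) · ω^(∑_{u<v} Γ u v · x u · x v)`. -/
noncomputable def graphState (d n : ℕ) (ω : ℂ) (Γ : Matrix (Fin n) (Fin n) (ZMod d)) :
    (Fin n → ZMod d) → ℂ := fun x =>
  (((d : ℝ) ^ (-(n : ℝ) / 2) : ℝ) : ℂ) *
    ω ^ (∑ u : Fin n, ∑ v : Fin n, if u < v then Γ u v * x u * x v else 0).val

/-- The `γ`-local scaling of `Γ` about the vertex `w`. -/
def localScaling {d n : ℕ} (Γ : Matrix (Fin n) (Fin n) (ZMod d)) (γ : ZMod d) (w : Fin n) :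
    Matrix (Fin n) (Fin n) (ZMod d) :=
  Matrix.of fun u v => if u = w ∨ v = w then γ * Γ u v else Γ u v

theorem graphState_localScaling
    (d n : ℕ) (hd : Nat.Prime d) (hn : 1 ≤ n)
    (Γ : Matrix (Fin n) (Fin n) (ZMod d)) (hΓsymm : Γ.IsSymm) (hΓdiag : ∀ u, Γ u u = 0)
    (ω : ℂ) (hω : IsPrimitiveRoot ω d)
    (w : Fin n) (γ : ZMod d) (hγ : γ ≠ 0) (x : Fin n → ZMod d) :
    graphState d n ω (localScaling Γ γ w) x
      = graphState d n ω Γ (Function.update x w (γ * x w)) := by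
  unfold graphState
  congr 2
  apply congrArg ZMod.val
  apply Finset.sum_congr rfl
  intro u _
  apply Finset.sum_congr rfl
  intro v _
  by_cases huv : u < v
  · simp only [if_pos huv, localScaling, Matrix.of_apply]
    have hne : u ≠ v := ne_of_lt huv
    by_cases hu : u = w
    · have hv : v ≠ w := fun h => hne (hu.trans h.symm)
      simp [hu, hv, Function.update_apply]
      ring
    · by_cases hv : v = w
      · simp [hu, hv, Function.update_apply]
        ring
      · simp [hu, hv, Function.update_apply]
  · simp [huv]
end

section
/- Let d be an odd prime, n ≥ 1, Γ a symmetric n×n matrix over ZMod d with zero diagonal, ω : ℂ a primitive d-th root of unity, and ψ_Γ the graph-state amplitude function. Fix w : Fin n and γ : ZMod d. Define single-qudit matrices in Matrix (ZMod d) (ZMod d) ℂ: the Fourier matrix H with entries H j k = d^(−1/2)·ω^(−j·k), the diagonal matrix P^γ with diagonal entries ω^(γ·2⁻¹·k·(k−1)) (2⁻¹ the inverse of 2 in ZMod d), and, for each v ≠ w, the diagonal matrix D_v with diagonal entries ω^(−γ·2⁻¹·(Γ v w · k)·(Γ v w · k − 1)). For a single-qudit matrix A and a site v, let A act at site v on ψ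 : (Fin n → ZMod d) → ℂ by (A ·_v ψ)(x) = Σ_k A (x v) k · ψ(Function.update x v k). Then ψ_{Γ ⋆_γ w} equals the result of applying Hᴴ · P^γ · H at site w and applying D_v at each site v ≠ w to ψ_Γ; i.e., local complementation acts on the graph state by a product of single-qudit (generalized local Clifford) operators. -/
open scoped Matrix
open Finset

/-- The `γ`-local complementation of `Γ` about the vertex `w`. -/
def localComp {d n : ℕ} (Γ : Matrix (Fin n) (Fin n) (ZMod d)) (γ : ZMod d) (w : Fin n) :
    Matrix (Fin n) (Fin n) (ZMod d) :=
  Matrix.of fun u v => if u ≠ v then Γ u v + γ * Γ u w * Γ v w else Γ u v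

/-- The qudit Fourier matrix `H j k = d^(-1/2) · ω^(-j·k)`. -/
noncomputable def qFourier (d : ℕ) (ω : ℂ) : Matrix (ZMod d) (ZMod d) ℂ :=
  Matrix.of fun j k => (((d : ℝ) ^ (-(1 : ℝ) / 2) : ℝ) : ℂ) * ω ^ (-(j * k)).val

/-- The diagonal phase gate `P^γ` with entries `ω^(γ·2⁻¹·k·(k-1))`. -/
noncomputable def phaseGateP (d : ℕ) (ω : ℂ) (γ : ZMod d) : Matrix (ZMod d) (ZMod d) ℂ :=
  Matrix.diagonal fun k => ω ^ (γ * (2 : ZMod d)⁻¹ * k * (k - 1)).val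

/-! ### Auxiliary definitions and lemmas -/

noncomputable def ee (d : ℕ) (ω : ℂ) : ZMod d → ℂ := fun a => ω ^ a.val

section ee
variable {d : ℕ} [NeZero d] {ω : ℂ}

lemma pow_val_mod (h1 : ω ^ d = 1) (s : ℕ) : ω ^ (s % d) = ω ^ s := by
  conv_rhs => rw [← Nat.div_add_mod s d]
  rw [pow_add, pow_mul, h1, one_pow, one_mul]

lemma ee_add (h1 : ω ^ d = 1) (a b : ZMod d) :
    ee d ω (a + b) = ee d ω a * ee d ω b := by
  unfold ee
  rw [ZMod.val_add, pow_val_mod h1, pow_add]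

lemma ee_zero : ee d ω 0 = 1 := by simp [ee]

lemma ee_sum (h1 : ω ^ d = 1) {ι : Type*} (s : Finset ι) (f : ι → ZMod d) :
    ee d ω (∑ i ∈ s, f i) = ∏ i ∈ s, ee d ω (f i) := by
  classical
  induction s using Finset.induction_on with
  | empty => simpa using ee_zero (d := d) (ω := ω)
  | @insert _ _ h ih => rw [Finset.sum_insert h, Finset.prod_insert h, ee_add h1, ih]

lemma ee_mul_neg (h1 : ω ^ d = 1) (a : ZMod d) : ee d ω a * ee d ω (-a) = 1 := by
  rw [← ee_add h1]; simpa using ee_zero (d := d) (ω := ω)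

lemma ee_norm (h1 : ω ^ d = 1) (a : ZMod d) : ‖ee d ω a‖ = 1 := by
  have h : (ee d ω a) ^ d = 1 := by
    unfold ee
    rw [← pow_mul, mul_comm, pow_mul, h1, one_pow]
  have h2 : ‖ee d ω a‖ ^ d = 1 := by
    rw [← norm_pow, h, norm_one]
  have hd : d ≠ 0 := NeZero.ne d
  by_contra hne
  rcases lt_or_gt_of_ne hne with h3 | h3
  · exact (ne_of_lt (pow_lt_one₀ (norm_nonneg _) h3 hd)) h2
  · exact (ne_of_gt (one_lt_pow₀ h3 hd)) h2

lemma ee_conj (h1 : ω ^ d = 1) (a : ZMod d) :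
    (starRingEnd ℂ) (ee d ω a) = ee d ω (-a) := by
  rw [← Complex.inv_eq_conj (ee_norm h1 a)]
  exact inv_eq_of_mul_eq_one_right (ee_mul_neg h1 a)

lemma ee_delta (hd : Nat.Prime d) (hω : IsPrimitiveRoot ω d) (c : ZMod d) :
    ∑ m : ZMod d, ee d ω (m * c) = if c = 0 then (d : ℂ) else 0 := by
  haveI : Fact d.Prime := ⟨hd⟩
  split_ifs with hc
  · subst hc
    simp [ee_zero, ZMod.card]
  · have hsum : ∑ m : ZMod d, ee d ω (m * c) = ∑ m : ZMod d, ee d ω m := by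
      exact Fintype.sum_equiv (Equiv.mulRight₀ c hc) _ _ (fun m => rfl)
    rw [hsum]
    have hval : ∑ m : ZMod d, ee d ω m = ∑ i ∈ range d, ω ^ i := by
      refine Finset.sum_nbij' (fun m => m.val) (fun i => (i : ZMod d)) ?_ ?_ ?_ ?_ ?_
      · intro m _; exact Finset.mem_range.mpr (ZMod.val_lt m)
      · intro i _; exact Finset.mem_univ _
      · intro m _; exact ZMod.natCast_zmod_val m
      · intro i hi; exact ZMod.val_natCast_of_lt (Finset.mem_range.mp hi)
      · intro m _; rfl
    rw [hval]
    exact hω.geom_sum_eq_zero hd.one_lt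
end ee

def Qf {d n : ℕ} (Γ : Matrix (Fin n) (Fin n) (ZMod d)) (x : Fin n → ZMod d) : ZMod d :=
  ∑ u : Fin n, ∑ v : Fin n, if u < v then Γ u v * x u * x v else 0

lemma graphState_eq (d n : ℕ) (ω : ℂ) (Γ : Matrix (Fin n) (Fin n) (ZMod d))
    (x : Fin n → ZMod d) :
    graphState d n ω Γ x = (((d : ℝ) ^ (-(n : ℝ) / 2) : ℝ) : ℂ) * ee d ω (Qf Γ x) := rfl

section Q
variable {d n : ℕ} (Γ : Matrix (Fin n) (Fin n) (ZMod d)) (x : Fin n → ZMod d) (w : Fin n)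

lemma Q_update (hΓsymm : Γ.IsSymm) (hΓdiag : ∀ u, Γ u u = 0) (m : ZMod d) :
    Qf Γ (Function.update x w m)
      = Qf Γ (Function.update x w 0) + m * ∑ v, Γ v w * x v := by
  classical
  have key : ∀ u v : Fin n,
      (if u < v then Γ u v * Function.update x w m u * Function.update x w m v else 0)
      = (if u < v then Γ u v * Function.update x w 0 u * Function.update x w 0 v else 0)
        + m * ((if u = w ∧ w < v then Γ w v * x v else 0)
             + (if v = w ∧ u < w then Γ u w * x u else 0)) := by
    intro u v
    by_cases hu : u = w <;> by_cases hv : v = w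
    · subst hu; subst hv; simp
    · subst hu
      simp only [Function.update_self, Function.update_of_ne hv, hv, if_false,
        and_false, false_and, true_and, add_zero, mul_zero]
      split_ifs with h <;> ring
    · subst hv
      simp only [Function.update_self, Function.update_of_ne hu, hu, if_false,
        and_false, false_and, true_and, zero_add, mul_zero]
      split_ifs with h <;> ring
    · simp only [Function.update_of_ne hu, Function.update_of_ne hv, hu, hv,
        false_and, if_false, add_zero, mul_zero]
  unfold Qf
  simp_rw [key, Finset.sum_add_distrib, ← Finset.mul_sum]
  congr 1
  congr 1
  have h1 : ∀ u : Fin n, (∑ v : Fin n, ((if u = w ∧ w < v then Γ w v * x v else 0)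
      + (if v = w ∧ u < w then Γ u w * x u else 0)))
      = (if u = w then ∑ v : Fin n, (if w < v then Γ w v * x v else 0) else 0)
        + (if u < w then Γ u w * x u else 0) := by
    intro u
    rw [Finset.sum_add_distrib]
    congr 1
    · by_cases hu : u = w <;> simp [hu]
    · by_cases h : u < w <;> simp [h]
  simp_rw [h1]
  rw [Finset.sum_add_distrib, Finset.sum_ite_eq' univ w]
  simp only [mem_univ, if_true]
  rw [← Finset.sum_add_distrib]
  apply Finset.sum_congr rfl
  intro v _
  have hs : Γ w v = Γ v w := by
    have := hΓsymm; rw [Matrix.IsSymm] at this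
    exact (congrFun (congrFun this v) w).symm ▸ rfl
  rcases lt_trichotomy w v with h | h | h
  · rw [if_pos h, if_neg (asymm h), hs]; ring
  · subst h; simp [hΓdiag]
  · rw [if_neg (asymm h), if_pos h]; ring

lemma Q_main (hΓsymm : Γ.IsSymm) (hΓdiag : ∀ u, Γ u u = 0) (γ : ZMod d)
    (h2 : (2 : ZMod d)⁻¹ * 2 = 1) :
    Qf (localComp Γ γ w) x
      = (∑ v, -(γ * (2:ZMod d)⁻¹ * (Γ v w * x v) * (Γ v w * x v - 1)))
        + ((∑ v, Γ v w * x v) * x w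
            + γ * (2:ZMod d)⁻¹ * (∑ v, Γ v w * x v) * ((∑ v, Γ v w * x v) - 1))
        + Qf Γ (Function.update x w 0) := by
  classical
  set t : Fin n → ZMod d := fun v => Γ v w * x v with ht
  set S : ZMod d := ∑ v, t v with hS
  set T : ZMod d := ∑ u : Fin n, ∑ v : Fin n, if u < v then t u * t v else 0 with hT
  have hQ' : Qf (localComp Γ γ w) x = Qf Γ x + γ * T := by
    unfold Qf
    rw [hT, Finset.mul_sum]
    simp_rw [Finset.mul_sum]
    rw [← Finset.sum_add_distrib]
    apply Finset.sum_congr rfl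
    intro u _
    rw [← Finset.sum_add_distrib]
    apply Finset.sum_congr rfl
    intro v _
    split_ifs with h
    · have : localComp Γ γ w u v = Γ u v + γ * Γ u w * Γ v w := by
        simp [localComp, Matrix.of_apply, ne_of_lt h]
      rw [this, ht]; ring
    · simp
  have hQx : Qf Γ x = Qf Γ (Function.update x w 0) + x w * S := by
    have := Q_update Γ x w hΓsymm hΓdiag (x w)
    rw [Function.update_eq_self] at this
    rw [this, hS]
  have hSS : S * S = 2 * T + ∑ v, t v * t v := by
    rw [hS, Finset.sum_mul_sum]
    have key : ∀ u v : Fin n, t u * t v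
        = (if u < v then t u * t v else 0) + (if v < u then t u * t v else 0)
          + (if u = v then t u * t v else 0) := by
      intro u v
      rcases lt_trichotomy u v with h | h | h
      · rw [if_pos h, if_neg (asymm h), if_neg (ne_of_lt h)]; ring
      · subst h
        rw [if_neg (lt_irrefl u), if_pos rfl]; ring
      · rw [if_neg (asymm h), if_pos h, if_neg (ne_of_gt h)]; ring
    have hkey2 : (∑ u : Fin n, ∑ v : Fin n, t u * t v)
        = (∑ u : Fin n, ∑ v : Fin n, if u < v then t u * t v else 0)
          + (∑ u : Fin n, ∑ v : Fin n, if v < u then t u * t v else 0)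
          + (∑ u : Fin n, ∑ v : Fin n, if u = v then t u * t v else 0) := by
      rw [← Finset.sum_add_distrib, ← Finset.sum_add_distrib]
      apply Finset.sum_congr rfl; intro u _
      rw [← Finset.sum_add_distrib, ← Finset.sum_add_distrib]
      apply Finset.sum_congr rfl; intro v _
      exact key u v
    rw [hkey2]
    have hswap : (∑ u : Fin n, ∑ v : Fin n, if v < u then t u * t v else 0) = T := by
      rw [hT, Finset.sum_comm]
      apply Finset.sum_congr rfl; intro u _
      apply Finset.sum_congr rfl; intro v _
      split_ifs <;> ring
    have hdiag : (∑ u : Fin n, ∑ v : Fin n, if u = v then t u * t v else 0)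
        = ∑ v, t v * t v := by
      apply Finset.sum_congr rfl; intro u _
      simp
    rw [hswap, hdiag, ← hT]
    ring
  have hgsum : (∑ v, -(γ * (2:ZMod d)⁻¹ * t v * (t v - 1)))
      = -(γ * (2:ZMod d)⁻¹ * ∑ v, t v * t v) + γ * (2:ZMod d)⁻¹ * S := by
    rw [hS, Finset.mul_sum, Finset.mul_sum, ← Finset.sum_neg_distrib, ← Finset.sum_add_distrib]
    apply Finset.sum_congr rfl
    intro v _
    ring
  rw [hQ', hQx, hgsum]
  linear_combination (-(γ * (2:ZMod d)⁻¹)) * hSS - γ * T * h2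

end Q



/-- Local complementation acts on the graph state by a product of single-qudit
(generalized local Clifford) operators: `Hᴴ · P^γ · H` at site `w` and the diagonal
matrix `D_v` at each site `v ≠ w`. -/
theorem graphState_localComp_clifford
    (d n : ℕ) (hd : Nat.Prime d) (hodd : Odd d) [NeZero d] (hn : 1 ≤ n)
    (ω : ℂ) (hω : IsPrimitiveRoot ω d)
    (Γ : Matrix (Fin n) (Fin n) (ZMod d)) (hΓsymm : Γ.IsSymm) (hΓdiag : ∀ u, Γ u u = 0)
    (w : Fin n) (γ : ZMod d)
    (A : Fin n → Matrix (ZMod d) (ZMod d) ℂ)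
    (hAw : A w = (qFourier d ω)ᴴ * phaseGateP d ω γ * qFourier d ω)
    (hAv : ∀ v, v ≠ w → A v = Matrix.diagonal fun k =>
      ω ^ (-(γ * (2 : ZMod d)⁻¹ * (Γ v w * k) * (Γ v w * k - 1))).val) :
    ∀ x, graphState d n ω (localComp Γ γ w) x
      = ∑ y : Fin n → ZMod d, (∏ j, A j (x j) (y j)) * graphState d n ω Γ y := by
  intro x
  classical
  haveI : Fact d.Prime := ⟨hd⟩
  have h1 : ω ^ d = 1 := hω.pow_eq_one
  have h2ne : (2 : ZMod d) ≠ 0 := by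
    intro h
    have h' : ((2 : ℕ) : ZMod d) = 0 := by exact_mod_cast h
    have hdvd : d ∣ 2 := (ZMod.natCast_eq_zero_iff 2 d).mp h'
    have hd2 : d = 2 := (Nat.prime_dvd_prime_iff_eq hd Nat.prime_two).mp hdvd
    rw [hd2] at hodd
    exact absurd hodd (by decide)
  have h2 : (2 : ZMod d)⁻¹ * 2 = 1 := inv_mul_cancel₀ h2ne
  -- abbreviations
  set c : ℂ := (((d : ℝ) ^ (-(n : ℝ) / 2) : ℝ) : ℂ) with hc
  set r : ℂ := (((d : ℝ) ^ (-(1 : ℝ) / 2) : ℝ) : ℂ) with hr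
  set S : ZMod d := ∑ v, Γ v w * x v with hSdef
  set Q' : ZMod d := Qf Γ (Function.update x w 0) with hQ'def
  set g : Fin n → ZMod d :=
    fun v => -(γ * (2 : ZMod d)⁻¹ * (Γ v w * x v) * (Γ v w * x v - 1)) with hgdef
  -- Step 1: restrict the sum over y to updates of x at w
  have hstep1 : (∑ y : Fin n → ZMod d, (∏ j, A j (x j) (y j)) * graphState d n ω Γ y)
      = ∑ m : ZMod d, (∏ j, A j (x j) (Function.update x w m j))
          * graphState d n ω Γ (Function.update x w m) := by
    have hvanish : ∀ y ∈ (univ : Finset (Fin n → ZMod d)),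
        ((∏ j, A j (x j) (y j)) * graphState d n ω Γ y ≠ 0) →
        (∀ v, v ≠ w → y v = x v) := by
      intro y _ hy v hv
      by_contra hne
      apply hy
      have hzero : A v (x v) (y v) = 0 := by
        rw [hAv v hv, Matrix.diagonal_apply_ne _ (fun h => hne h.symm)]
      rw [Finset.prod_eq_zero (Finset.mem_univ v) hzero, zero_mul]
    rw [← Finset.sum_filter_of_ne hvanish]
    refine Finset.sum_bij' (fun y _ => y w) (fun m _ => Function.update x w m)
      ?_ ?_ ?_ ?_ ?_
    · intro y _; exact Finset.mem_univ _
    · intro m _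
      simp only [Finset.mem_filter, Finset.mem_univ, true_and]
      intro v hv; exact Function.update_of_ne hv _ _
    · intro y hy
      have hupd : Function.update x w (y w) = y := by
        funext v
        by_cases hv : v = w
        · subst hv; rw [Function.update_self]
        · rw [Function.update_of_ne hv]
          exact ((Finset.mem_filter.mp hy).2 v hv).symm
      exact hupd
    · intro m _
      show Function.update x w m w = m
      rw [Function.update_self]
    · intro y hy
      have hupd : Function.update x w (y w) = y := by
        funext v
        by_cases hv : v = w
        · subst hv; rw [Function.update_self]
        · rw [Function.update_of_ne hv]
          exact ((Finset.mem_filter.mp hy).2 v hv).symm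
      show _ = (∏ j, A j (x j) (Function.update x w (y w) j))
          * graphState d n ω Γ (Function.update x w (y w))
      rw [hupd]
  -- diagonal factors
  have hDv : ∀ v, v ≠ w → A v (x v) (x v) = ee d ω (g v) := by
    intro v hv
    rw [hAv v hv, Matrix.diagonal_apply_eq]
    rfl
  have hgw : g w = 0 := by simp [hgdef, hΓdiag w]
  have hPdiag : (∏ j ∈ univ.erase w, A j (x j) (x j)) = ee d ω (∑ v, g v) := by
    rw [← Finset.add_sum_erase univ g (Finset.mem_univ w), hgw, zero_add, ee_sum h1]
    exact (Finset.prod_congr rfl fun j hj => hDv j (Finset.mem_erase.mp hj).1)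
  have hprod : ∀ m, (∏ j, A j (x j) (Function.update x w m j))
      = A w (x w) m * ee d ω (∑ v, g v) := by
    intro m
    rw [← Finset.mul_prod_erase univ _ (Finset.mem_univ w), Function.update_self]
    congr 1
    rw [← hPdiag]
    exact Finset.prod_congr rfl fun j hj => by
      rw [Function.update_of_ne (Finset.mem_erase.mp hj).1]
  -- the HᴴPH entry
  have hAwm : ∀ m : ZMod d, A w (x w) m
      = ∑ k : ZMod d, (r * r) * (ee d ω (k * x w)
          * ee d ω (γ * (2 : ZMod d)⁻¹ * k * (k - 1))) * ee d ω (-(k * m)) := by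
    intro m
    rw [hAw, Matrix.mul_apply]
    apply Finset.sum_congr rfl
    intro k _
    show ((qFourier d ω)ᴴ * phaseGateP d ω γ) (x w) k * qFourier d ω k m = _
    rw [phaseGateP, Matrix.mul_diagonal, Matrix.conjTranspose_apply]
    have hH : qFourier d ω k (x w) = r * ee d ω (-(k * x w)) := rfl
    have hH2 : qFourier d ω k m = r * ee d ω (-(k * m)) := rfl
    rw [hH, hH2, star_mul']
    have hsr : star r = r := by rw [hr]; exact Complex.conj_ofReal _
    have hse : star (ee d ω (-(k * x w))) = ee d ω (k * x w) := by
      have := ee_conj h1 (-(k * x w))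
      rwa [neg_neg] at this
    rw [hsr, hse]
    show r * ee d ω (k * x w) * ee d ω (γ * (2 : ZMod d)⁻¹ * k * (k - 1))
        * (r * ee d ω (-(k * m))) = _
    ring
  -- graph state at updated argument
  have hGS : ∀ m, graphState d n ω Γ (Function.update x w m)
      = c * ee d ω (Q' + m * S) := by
    intro m
    rw [graphState_eq, Q_update Γ x w hΓsymm hΓdiag m]
  -- per-m formula
  have hFm : ∀ m : ZMod d,
      (∏ j, A j (x j) (Function.update x w m j))
        * graphState d n ω Γ (Function.update x w m)
      = ∑ k : ZMod d, (c * ee d ω (∑ v, g v) * ee d ω Q'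
          * ((r * r) * (ee d ω (k * x w) * ee d ω (γ * (2 : ZMod d)⁻¹ * k * (k - 1)))))
          * ee d ω (m * (S - k)) := by
    intro m
    rw [hprod m, hGS m, hAwm m, Finset.sum_mul, Finset.sum_mul]
    apply Finset.sum_congr rfl
    intro k _
    have e1 : ee d ω (Q' + m * S) = ee d ω Q' * ee d ω (m * S) := ee_add h1 _ _
    have e2 : ee d ω (m * (S - k)) = ee d ω (-(k * m)) * ee d ω (m * S) := by
      rw [← ee_add h1]; congr 1; ring
    rw [e1, e2]
    ring
  -- assemble
  rw [hstep1]
  symm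
  calc ∑ m : ZMod d, (∏ j, A j (x j) (Function.update x w m j))
        * graphState d n ω Γ (Function.update x w m)
      = ∑ m : ZMod d, ∑ k : ZMod d, (c * ee d ω (∑ v, g v) * ee d ω Q'
          * ((r * r) * (ee d ω (k * x w) * ee d ω (γ * (2 : ZMod d)⁻¹ * k * (k - 1)))))
          * ee d ω (m * (S - k)) := Finset.sum_congr rfl fun m _ => hFm m
    _ = ∑ k : ZMod d, ∑ m : ZMod d, (c * ee d ω (∑ v, g v) * ee d ω Q'
          * ((r * r) * (ee d ω (k * x w) * ee d ω (γ * (2 : ZMod d)⁻¹ * k * (k - 1)))))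
          * ee d ω (m * (S - k)) := Finset.sum_comm
    _ = ∑ k : ZMod d, (c * ee d ω (∑ v, g v) * ee d ω Q'
          * ((r * r) * (ee d ω (k * x w) * ee d ω (γ * (2 : ZMod d)⁻¹ * k * (k - 1)))))
          * (if S - k = 0 then (d : ℂ) else 0) := by
        apply Finset.sum_congr rfl
        intro k _
        rw [← Finset.mul_sum, ee_delta hd hω (S - k)]
    _ = ∑ k : ZMod d, (if k = S then (c * ee d ω (∑ v, g v) * ee d ω Q'
          * ((r * r) * (ee d ω (k * x w) * ee d ω (γ * (2 : ZMod d)⁻¹ * k * (k - 1)))))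
          * (d : ℂ) else 0) := by
        apply Finset.sum_congr rfl
        intro k _
        by_cases hk : k = S
        · rw [if_pos hk, if_pos (by rw [hk, sub_self])]
        · rw [if_neg hk, if_neg (fun h => hk (sub_eq_zero.mp h).symm), mul_zero]
    _ = (c * ee d ω (∑ v, g v) * ee d ω Q'
          * ((r * r) * (ee d ω (S * x w) * ee d ω (γ * (2 : ZMod d)⁻¹ * S * (S - 1)))))
          * (d : ℂ) := by
        rw [Finset.sum_ite_eq' univ S]
        simp
    _ = c * (ee d ω (∑ v, g v) * (ee d ω (S * x w)
          * ee d ω (γ * (2 : ZMod d)⁻¹ * S * (S - 1))) * ee d ω Q') := by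
        have hdpos : (0 : ℝ) < d := by exact_mod_cast hd.pos
        have hrrR : (d : ℝ) ^ (-(1 : ℝ) / 2) * (d : ℝ) ^ (-(1 : ℝ) / 2) = ((d : ℝ))⁻¹ := by
          rw [← Real.rpow_add hdpos]
          norm_num [Real.rpow_neg_one]
        have hrr : r * r * (d : ℂ) = 1 := by
          rw [hr, ← Complex.ofReal_mul, hrrR, ← Complex.ofReal_natCast,
            ← Complex.ofReal_mul, inv_mul_cancel₀ (ne_of_gt hdpos), Complex.ofReal_one]
        linear_combination (c * ee d ω (∑ v, g v) * ee d ω Q' * ee d ω (S * x w)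
          * ee d ω (γ * (2 : ZMod d)⁻¹ * S * (S - 1))) * hrr
    _ = graphState d n ω (localComp Γ γ w) x := by
        rw [graphState_eq, Q_main Γ x w hΓsymm hΓdiag γ h2]
        rw [ee_add h1, ee_add h1, ee_add h1]
end

section
/- Let d be an odd prime, n ≥ 1, Γ a symmetric n×n matrix over ZMod d with zero diagonal, ω : ℂ a primitive d-th root of unity, and ψ_Γ the graph-state amplitude function. Then for every w : Fin n, every γ : ZMod d, and every x : Fin n → ZMod d, ψ_{Γ ⋆_γ w}(x) = ω^(γ · 2⁻¹ · ((Σ_u Γ u w · x u)² − Σ_u (Γ u w)² · (x u)²)) · ψ_Γ(x), where 2⁻¹ is the inverse of 2 in ZMod d. In particular, the graph states of Γ ⋆_γ w and Γ differ only by a phase function of x that depends on Γ only through its w-th column. -/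
lemma pow_val_add' {d : ℕ} [NeZero d] {ω : ℂ} (h1 : ω ^ d = 1) (a b : ZMod d) :
    ω ^ ((a + b).val) = ω ^ a.val * ω ^ b.val := by
  rw [ZMod.val_add, ← pow_add]
  conv_rhs => rw [← Nat.mod_add_div (a.val + b.val) d]
  rw [pow_add, pow_mul, h1, one_pow, mul_one]

/-- The graph states of `Γ ⋆_γ w` and `Γ` differ only by a phase function of `x`
depending on `Γ` only through its `w`-th column. -/
theorem graphState_localComp_phase
    (d n : ℕ) (hd : Nat.Prime d) (hodd : Odd d) (hn : 1 ≤ n)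
    (Γ : Matrix (Fin n) (Fin n) (ZMod d)) (hΓsymm : Γ.IsSymm) (hΓdiag : ∀ u, Γ u u = 0)
    (ω : ℂ) (hω : IsPrimitiveRoot ω d)
    (w : Fin n) (γ : ZMod d) (x : Fin n → ZMod d) :
    graphState d n ω (localComp Γ γ w) x
      = ω ^ ((γ * (2 : ZMod d)⁻¹ *
            ((∑ u, Γ u w * x u) ^ 2 - ∑ u, (Γ u w) ^ 2 * (x u) ^ 2)).val)
          * graphState d n ω Γ x := by
  haveI : Fact (Nat.Prime d) := ⟨hd⟩
  haveI : NeZero d := ⟨hd.ne_zero⟩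
  set a : Fin n → ZMod d := fun u => Γ u w * x u with ha
  set T : ZMod d := ∑ u : Fin n, ∑ v : Fin n, if u < v then a u * a v else 0 with hT
  -- 2 is invertible
  have h2 : (2 : ZMod d) ≠ 0 := by
    intro h
    have : (d : ℕ) ∣ 2 := by
      have := (ZMod.natCast_eq_zero_iff 2 d).mp (by exact_mod_cast h)
      exact this
    have hd2 : d = 2 := (Nat.prime_dvd_prime_iff_eq hd Nat.prime_two).mp this
    rw [hd2] at hodd
    exact (by norm_num : ¬ Odd 2) hodd
  -- square of sum identity
  have hsq : (∑ u, a u) ^ 2 = (∑ u, (a u) ^ 2) + 2 * T := by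
    have expand : ∀ u v : Fin n, a u * a v =
        (if u = v then a u * a v else 0) + ((if u < v then a u * a v else 0)
          + (if v < u then a u * a v else 0)) := by
      intro u v
      rcases lt_trichotomy u v with h | h | h
      · simp [h, h.ne, not_lt_of_gt h]
      · simp [h, lt_irrefl]
      · simp [h, h.ne', not_lt_of_gt h]
    have hswap : (∑ u : Fin n, ∑ v : Fin n, if v < u then a u * a v else 0) = T := by
      rw [Finset.sum_comm, hT]
      refine Finset.sum_congr rfl fun u _ => Finset.sum_congr rfl fun v _ => ?_
      rw [mul_comm]
    have : (∑ u, a u) * (∑ v, a v) = ∑ u : Fin n, ∑ v : Fin n, a u * a v := by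
      rw [Finset.sum_mul_sum]
    rw [sq, this]
    have hsplit : (∑ u : Fin n, ∑ v : Fin n, a u * a v)
        = ∑ u : Fin n, ∑ v : Fin n, ((if u = v then a u * a v else 0)
            + ((if u < v then a u * a v else 0) + (if v < u then a u * a v else 0))) :=
      Finset.sum_congr rfl fun u _ => Finset.sum_congr rfl fun v _ => expand u v
    rw [hsplit]
    simp_rw [Finset.sum_add_distrib]
    rw [hswap, ← hT]
    have hdiag : (∑ u : Fin n, ∑ v : Fin n, if u = v then a u * a v else 0)
        = ∑ u, (a u) ^ 2 := by
      refine Finset.sum_congr rfl fun u _ => ?_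
      rw [Finset.sum_ite_eq, if_pos (Finset.mem_univ u), sq]
    rw [hdiag]
    ring
  -- the phase equals γ * T
  have hphase : γ * (2 : ZMod d)⁻¹ *
      ((∑ u, Γ u w * x u) ^ 2 - ∑ u, (Γ u w) ^ 2 * (x u) ^ 2) = γ * T := by
    have h1 : (∑ u, Γ u w * x u) = ∑ u, a u := rfl
    have h2' : (∑ u, (Γ u w) ^ 2 * (x u) ^ 2) = ∑ u, (a u) ^ 2 := by
      refine Finset.sum_congr rfl fun u _ => ?_
      rw [ha]; ring
    rw [h1, h2', hsq]
    have : (∑ u, (a u) ^ 2) + 2 * T - ∑ u, (a u) ^ 2 = 2 * T := by ring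
    rw [this, ← mul_assoc, mul_assoc γ, inv_mul_cancel₀ h2, mul_one]
  -- exponent identity
  have hexp : (∑ u : Fin n, ∑ v : Fin n, if u < v then (localComp Γ γ w) u v * x u * x v else 0)
      = (γ * (2 : ZMod d)⁻¹ *
          ((∑ u, Γ u w * x u) ^ 2 - ∑ u, (Γ u w) ^ 2 * (x u) ^ 2))
        + ∑ u : Fin n, ∑ v : Fin n, if u < v then Γ u v * x u * x v else 0 := by
    rw [hphase]
    have step : ∀ u v : Fin n, (if u < v then (localComp Γ γ w) u v * x u * x v else 0)
        = (if u < v then γ * (a u * a v) else 0) + (if u < v then Γ u v * x u * x v else 0) := by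
      intro u v
      by_cases h : u < v
      · simp only [if_pos h, localComp, Matrix.of_apply, if_pos h.ne, ha]
        ring
      · simp [h]
    simp_rw [step, Finset.sum_add_distrib]
    congr 1
    rw [hT, Finset.mul_sum]
    refine Finset.sum_congr rfl fun u _ => ?_
    rw [Finset.mul_sum]
    refine Finset.sum_congr rfl fun v _ => ?_
    rw [mul_ite, mul_zero]
  -- conclude
  simp only [graphState]
  rw [hexp, pow_val_add' hω.pow_eq_one]
  ring
end

section
/- Let d be a prime, n ≥ 1, and ψ : (Fin n → ZMod d) → ℂ. Suppose for each site j : Fin n we are given an invertible matrix A j : Matrix (ZMod d) (ZMod d) ℂ, and define the locally transformed state (Aψ)(x) = Σ_{y : Fin n → ZMod d} (∏_j A j (x j) (y j)) · ψ(y). Then the Schmidt rank is invariant: r(Aψ) = r(ψ). In particular, the Schmidt measure E_S = log_d r is the same for all graph states in the same orbit under local complementation and local scaling. -/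
/-- The Schmidt rank of `ψ : (Fin n → ZMod d) → ℂ`: the least `R` such that `ψ` is a
sum of `R` product functions. -/
noncomputable def schmidtRank {d n : ℕ} (ψ : (Fin n → ZMod d) → ℂ) : ℕ :=
  sInf {R : ℕ | ∃ f : Fin R → Fin n → ZMod d → ℂ, ∀ x, ψ x = ∑ i, ∏ j, f i j (x j)}

private lemma sumProd {n d : ℕ} [NeZero d] (g : Fin n → ZMod d → ℂ) :
    ∑ y : Fin n → ZMod d, ∏ j, g j (y j) = ∏ j, ∑ t, g j t := by
  rw [Finset.prod_univ_sum, Fintype.piFinset_univ]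

private lemma decomp_exists {n d : ℕ} [NeZero d] (hn : 1 ≤ n) (ψ : (Fin n → ZMod d) → ℂ) :
    ∃ f : Fin (Fintype.card (Fin n → ZMod d)) → Fin n → ZMod d → ℂ,
      ∀ x, ψ x = ∑ i, ∏ j, f i j (x j) := by
  set e := (Fintype.equivFin (Fin n → ZMod d)).symm with he
  refine ⟨fun i j t => if j = (⟨0, hn⟩ : Fin n) then (if t = e i j then ψ (e i) else 0)
    else (if t = e i j then 1 else 0), fun x => ?_⟩
  have key : ∀ i, (∏ j, (if j = (⟨0, hn⟩ : Fin n) then (if x j = e i j then ψ (e i) else 0)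
      else (if x j = e i j then 1 else 0))) = if x = e i then ψ (e i) else 0 := by
    intro i
    by_cases hxz : x = e i
    · subst hxz
      simp [Finset.prod_ite_eq']
    · obtain ⟨j0, hj0⟩ := Function.ne_iff.mp hxz
      rw [if_neg hxz]
      refine Finset.prod_eq_zero (Finset.mem_univ j0) ?_
      by_cases h : j0 = (⟨0, hn⟩ : Fin n)
      · subst h; simp [hj0]
      · simp [h, hj0]
  simp only [key]
  rw [Fintype.sum_equiv e (fun i => if x = e i then ψ (e i) else 0)
    (fun z => if x = z then ψ z else 0) (fun i => rfl)]
  simp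

private lemma rank_apply_le {n d : ℕ} [NeZero d] (hn : 1 ≤ n)
    (A : Fin n → Matrix (ZMod d) (ZMod d) ℂ) (ψ : (Fin n → ZMod d) → ℂ) :
    schmidtRank (fun x => ∑ y : Fin n → ZMod d, (∏ j, A j (x j) (y j)) * ψ y)
      ≤ schmidtRank ψ := by
  have hne : {R : ℕ | ∃ f : Fin R → Fin n → ZMod d → ℂ,
      ∀ x, ψ x = ∑ i, ∏ j, f i j (x j)}.Nonempty :=
    ⟨_, decomp_exists hn ψ⟩
  obtain ⟨f, hf⟩ := Nat.sInf_mem hne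
  apply Nat.sInf_le
  refine ⟨fun i j t => ∑ s, A j t s * f i j s, fun x => ?_⟩
  calc ∑ y : Fin n → ZMod d, (∏ j, A j (x j) (y j)) * ψ y
      = ∑ y : Fin n → ZMod d, ∑ i, ∏ j, (A j (x j) (y j) * f i j (y j)) := by
        refine Finset.sum_congr rfl fun y _ => ?_
        rw [hf y, Finset.mul_sum]
        refine Finset.sum_congr rfl fun i _ => ?_
        rw [Finset.prod_mul_distrib]
    _ = ∑ i, ∑ y : Fin n → ZMod d, ∏ j, (A j (x j) (y j) * f i j (y j)) := Finset.sum_comm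
    _ = ∑ i, ∏ j, ∑ s, A j (x j) s * f i j s := by
        refine Finset.sum_congr rfl fun i _ => ?_
        exact sumProd fun j s => A j (x j) s * f i j s

private lemma comp_eq {n d : ℕ} [NeZero d]
    (A B : Fin n → Matrix (ZMod d) (ZMod d) ℂ) (ψ : (Fin n → ZMod d) → ℂ) (x : Fin n → ZMod d) :
    ∑ y : Fin n → ZMod d, (∏ j, B j (x j) (y j)) *
        (∑ z : Fin n → ZMod d, (∏ j, A j (y j) (z j)) * ψ z)
      = ∑ z : Fin n → ZMod d, (∏ j, (B j * A j) (x j) (z j)) * ψ z := by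
  calc ∑ y : Fin n → ZMod d, (∏ j, B j (x j) (y j)) *
        (∑ z : Fin n → ZMod d, (∏ j, A j (y j) (z j)) * ψ z)
      = ∑ y : Fin n → ZMod d, ∑ z : Fin n → ZMod d,
          (∏ j, (B j (x j) (y j) * A j (y j) (z j))) * ψ z := by
        refine Finset.sum_congr rfl fun y _ => ?_
        rw [Finset.mul_sum]
        refine Finset.sum_congr rfl fun z _ => ?_
        rw [Finset.prod_mul_distrib, mul_assoc]
    _ = ∑ z : Fin n → ZMod d, (∑ y : Fin n → ZMod d,
          ∏ j, (B j (x j) (y j) * A j (y j) (z j))) * ψ z := by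
        rw [Finset.sum_comm]
        exact Finset.sum_congr rfl fun z _ => (Finset.sum_mul _ _ _).symm
    _ = ∑ z : Fin n → ZMod d, (∏ j, (B j * A j) (x j) (z j)) * ψ z := by
        refine Finset.sum_congr rfl fun z _ => ?_
        rw [sumProd fun j s => B j (x j) s * A j s (z j)]
        simp [Matrix.mul_apply]


/-- The Schmidt rank is invariant under invertible local (single-site) operations; in
particular, the Schmidt measure `E_S = log_d r` is the same for all graph states in the
same orbit under local complementation and local scaling. -/
theorem schmidtRank_local_invertible
    (d n : ℕ) (hd : Nat.Prime d) [NeZero d] (hn : 1 ≤ n)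
    (ψ : (Fin n → ZMod d) → ℂ)
    (A : Fin n → Matrix (ZMod d) (ZMod d) ℂ) (hA : ∀ j, IsUnit (A j)) :
    schmidtRank (fun x => ∑ y : Fin n → ZMod d, (∏ j, A j (x j) (y j)) * ψ y)
      = schmidtRank ψ := by
  set φ : (Fin n → ZMod d) → ℂ :=
    fun x => ∑ y : Fin n → ZMod d, (∏ j, A j (x j) (y j)) * ψ y with hφ
  have h1 : schmidtRank φ ≤ schmidtRank ψ := rank_apply_le hn A ψ
  have h2 : (fun x => ∑ y : Fin n → ZMod d, (∏ j, (A j)⁻¹ (x j) (y j)) * φ y) = ψ := by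
    funext x
    rw [hφ]
    rw [comp_eq A (fun j => (A j)⁻¹) ψ x]
    have hBA : ∀ j, (A j)⁻¹ * A j = 1 := fun j =>
      Matrix.nonsing_inv_mul (A j) ((Matrix.isUnit_iff_isUnit_det (A j)).mp (hA j))
    have : ∀ z : Fin n → ZMod d,
        (∏ j, ((A j)⁻¹ * A j) (x j) (z j)) = if x = z then 1 else 0 := by
      intro z
      by_cases hxz : x = z
      · subst hxz; simp [hBA, Matrix.one_apply]
      · obtain ⟨j0, hj0⟩ := Function.ne_iff.mp hxz
        rw [if_neg hxz]
        refine Finset.prod_eq_zero (Finset.mem_univ j0) ?_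
        simp [hBA, Matrix.one_apply, hj0]
    simp only [this]
    simp
  have h3 : schmidtRank ψ ≤ schmidtRank φ := by
    rw [← h2]
    exact rank_apply_le hn (fun j => (A j)⁻¹) φ
  exact le_antisymm h1 h3
end

section
/- Let d be a prime, n ≥ 1, ψ : (Fin n → ZMod d) → ℂ, and A ⊆ Fin n a subset of the sites with complement B. Let M_A(ψ) be the complex matrix indexed by pairs (a : A → ZMod d, b : B → ZMod d) whose (a,b) entry is ψ of the function that restricts to a on A and to b on B. Then the Schmidt rank of ψ is bounded below by the rank of this bipartite reshaping: Matrix.rank (M_A(ψ)) ≤ r(ψ). -/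
lemma schmidtRank_set_nonempty {d n : ℕ} [NeZero d] (hn : 1 ≤ n)
    (ψ : (Fin n → ZMod d) → ℂ) :
    {R : ℕ | ∃ f : Fin R → Fin n → ZMod d → ℂ, ∀ x, ψ x = ∑ i, ∏ j, f i j (x j)}.Nonempty := by
  classical
  let e := (Fintype.equivFin (Fin n → ZMod d)).symm
  refine ⟨Fintype.card (Fin n → ZMod d), ?_⟩
  set j0 : Fin n := ⟨0, hn⟩
  refine ⟨fun i j y => (if y = e i j then 1 else 0) * (if j = j0 then ψ (e i) else 1),
    fun x => ?_⟩
  have key : ∀ i, (∏ j, (if x j = e i j then (1:ℂ) else 0) * (if j = j0 then ψ (e i) else 1))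
      = if e.symm x = i then ψ x else 0 := by
    intro i
    by_cases hx : x = e i
    · subst hx
      simp [Finset.prod_mul_distrib, Finset.prod_ite_eq']
    · rw [if_neg (by intro h; exact hx (by rw [← h]; simp))]
      have : ∃ j, x j ≠ e i j := by
        by_contra h
        push_neg at h
        exact hx (funext h)
      obtain ⟨j, hj⟩ := this
      exact Finset.prod_eq_zero (Finset.mem_univ j) (by simp [hj])
  rw [Finset.sum_congr rfl (fun i _ => key i), Finset.sum_ite_eq]
  simp

/-- The Schmidt rank of `ψ` is bounded below by the rank of any bipartite reshaping of
`ψ`, with rows indexed by configurations on `A` and columns by configurations on the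
complement of `A`. -/
theorem rank_reshaping_le_schmidtRank
    (d n : ℕ) (hd : Nat.Prime d) [NeZero d] (hn : 1 ≤ n)
    (ψ : (Fin n → ZMod d) → ℂ) (A : Finset (Fin n)) :
    Matrix.rank (Matrix.of fun (a : {u // u ∈ A} → ZMod d) (b : {u // u ∈ Aᶜ} → ZMod d) =>
        ψ fun j => if h : j ∈ A then a ⟨j, h⟩ else b ⟨j, Finset.mem_compl.mpr h⟩)
      ≤ schmidtRank ψ := by
  classical
  obtain ⟨f, hf⟩ := Nat.sInf_mem (schmidtRank_set_nonempty hn ψ)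
  set R := schmidtRank ψ with hR
  let P : Matrix ({u // u ∈ A} → ZMod d) (Fin R) ℂ :=
    Matrix.of fun a i => ∏ j : {u // u ∈ A}, f i j (a j)
  let Q : Matrix (Fin R) ({u // u ∈ Aᶜ} → ZMod d) ℂ :=
    Matrix.of fun i b => ∏ j : {u // u ∈ Aᶜ}, f i j (b j)
  have hM : (Matrix.of fun (a : {u // u ∈ A} → ZMod d) (b : {u // u ∈ Aᶜ} → ZMod d) =>
      ψ fun j => if h : j ∈ A then a ⟨j, h⟩ else b ⟨j, Finset.mem_compl.mpr h⟩) = P * Q := by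
    ext a b
    rw [Matrix.mul_apply]
    simp only [Matrix.of_apply, P, Q]
    rw [hf]
    refine Finset.sum_congr rfl fun i _ => ?_
    set x := fun j => if h : j ∈ A then a ⟨j, h⟩ else b ⟨j, Finset.mem_compl.mpr h⟩ with hx
    have h1 : (∏ j : {u // u ∈ A}, f i j (a j)) = ∏ j ∈ A, f i j (x j) := by
      rw [← Finset.prod_attach A (fun j => f i j (x j))]
      refine Finset.prod_congr rfl fun j _ => ?_
      simp [hx, j.2]
    have h2 : (∏ j : {u // u ∈ Aᶜ}, f i j (b j)) = ∏ j ∈ Aᶜ, f i j (x j) := by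
      rw [← Finset.prod_attach Aᶜ (fun j => f i j (x j))]
      refine Finset.prod_congr rfl fun j _ => ?_
      have hj : ↑j ∉ A := Finset.mem_compl.mp j.2
      simp [hx, hj]
    rw [h1, h2, Finset.prod_mul_prod_compl A (fun j => f i j (x j))]
  rw [hM]
  calc Matrix.rank (P * Q) ≤ Matrix.rank P := Matrix.rank_mul_le_left P Q
    _ ≤ Fintype.card (Fin R) := Matrix.rank_le_card_width P
    _ = R := Fintype.card_fin R
end

section
/- Let d be a prime, ω : ℂ a primitive d-th root of unity, and C : Matrix (Fin p) (Fin q) (ZMod d) any matrix over ZMod d. Let N be the complex matrix with rows indexed by a : Fin p → ZMod d, columns indexed by b : Fin q → ZMod d, and entries N a b = ω^(Σ_{u,v} a u · C u v · b v). Then the complex rank of N equals d raised to the ZMod d-rank of C: Matrix.rank N = d ^ (Matrix.rank C). -/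
open scoped Matrix

/-- For a matrix `C` over `ZMod d` and a primitive `d`-th root of unity `ω`, the complex
rank of the "character" matrix `N a b = ω^(∑ u v, a u · C u v · b v)` equals `d` raised
to the `ZMod d`-rank of `C`. -/
theorem rank_character_matrix
    (d p q : ℕ) (hd : Nat.Prime d) [NeZero d] (ω : ℂ) (hω : IsPrimitiveRoot ω d)
    (C : Matrix (Fin p) (Fin q) (ZMod d)) :
    Matrix.rank (Matrix.of fun (a : Fin p → ZMod d) (b : Fin q → ZMod d) =>
        ω ^ (∑ u, ∑ v, a u * C u v * b v).val)
      = d ^ Matrix.rank C := by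
  classical
  haveI := Fact.mk hd
  set A := (Fin p → ZMod d)
  -- the character
  let χ : AddChar (ZMod d) ℂ := AddChar.zmodChar d hω.pow_eq_one
  have hχ_inj : Function.Injective χ := by
    intro x y h
    rw [AddChar.zmodChar_apply, AddChar.zmodChar_apply] at h
    exact ZMod.val_injective d (hω.pow_inj (ZMod.val_lt x) (ZMod.val_lt y) h)
  -- dot product add hom
  let φ : A → (A →+ ZMod d) := fun c =>
    AddMonoidHom.mk' (fun a => ∑ u, a u * c u) (fun a b => by
      rw [← Finset.sum_add_distrib]
      exact Finset.sum_congr rfl fun u _ => add_mul _ _ _)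
  let ε : A → AddChar A ℂ := fun c => χ.compAddMonoidHom (φ c)
  let e : A → (A → ℂ) := fun c => ⇑(ε c)
  have hφ_single : ∀ (c : A) (u : Fin p), φ c (Pi.single u 1) = c u := by
    intro c u
    simp [φ, Pi.single_apply, Finset.sum_ite_eq']
  have he_inj : Function.Injective e := by
    intro c c' h
    funext u
    have := congrFun h (Pi.single u 1)
    simp only [e, AddChar.compAddMonoidHom_apply, ε] at this
    rw [hφ_single, hφ_single] at this
    exact hχ_inj this
  -- linear independence of the characters
  have hm_inj : Function.Injective (fun c : A => (ε c).toMonoidHom) := by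
    intro c c' h
    apply he_inj
    funext a
    have := congrFun (congrArg DFunLike.coe h) (Multiplicative.ofAdd a)
    exact this
  have hli : LinearIndependent ℂ e :=
    (linearIndependent_monoidHom (Multiplicative A) ℂ).comp
      (fun c : A => (ε c).toMonoidHom) hm_inj
  -- columns of N
  have hNt : (Matrix.of fun (a : Fin p → ZMod d) (b : Fin q → ZMod d) =>
        ω ^ (∑ u, ∑ v, a u * C u v * b v).val)ᵀ
      = (fun b => e (C.mulVecLin b)) := by
    funext b a
    simp only [Matrix.transpose_apply, Matrix.of_apply, e, ε,
      AddChar.compAddMonoidHom_apply, AddChar.zmodChar_apply, χ, Matrix.mulVecLin_apply,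
      φ, AddMonoidHom.coe_mk, ZeroHom.coe_mk]
    congr 2
    simp only [Matrix.mulVec, dotProduct, Finset.mul_sum, mul_assoc]
    rfl
  have hcol : Set.range (Matrix.of fun (a : Fin p → ZMod d) (b : Fin q → ZMod d) =>
        ω ^ (∑ u, ∑ v, a u * C u v * b v).val)ᵀ
      = e '' (LinearMap.range C.mulVecLin : Set A) := by
    rw [hNt]
    ext x
    constructor
    · rintro ⟨b, rfl⟩
      exact ⟨C.mulVecLin b, ⟨b, rfl⟩, rfl⟩
    · rintro ⟨c, ⟨b, rfl⟩, rfl⟩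
      exact ⟨b, rfl⟩
  have hS_li : LinearIndependent ℂ
      ((↑) : (e '' (LinearMap.range C.mulVecLin : Set A)) → (A → ℂ)) := by
    have h := (hli.comp (Subtype.val : {x // x ∈ LinearMap.range C.mulVecLin} → A)
        Subtype.val_injective).linearIndepOn_id
    rw [Set.range_comp, Subtype.range_coe] at h
    exact h
  have hcard : Fintype.card (LinearMap.range C.mulVecLin) = d ^ C.rank := by
    rw [Module.card_eq_pow_finrank (K := ZMod d), ZMod.card]
    rfl
  rw [Matrix.rank_eq_finrank_span_cols, Matrix.col, hcol, finrank_span_set_eq_card hS_li,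
    Set.toFinset_card, ← Nat.card_eq_fintype_card, Nat.card_coe_set_eq,
    Set.ncard_image_of_injective _ he_inj, ← Nat.card_coe_set_eq]
  rw [show Nat.card (LinearMap.range C.mulVecLin : Set A)
      = Nat.card (LinearMap.range C.mulVecLin) from rfl,
    Nat.card_eq_fintype_card, hcard]
end

section
/- Let d be a prime, n ≥ 1, Γ a symmetric n×n matrix over ZMod d with zero diagonal, and ψ_Γ the graph-state amplitude function. Then for every subset A ⊆ Fin n with complement B, the Schmidt rank of the graph state satisfies r(ψ_Γ) ≥ d ^ (Matrix.rank Γ_{A,B}), where Γ_{A,B} is the off-diagonal block of Γ with rows in A and columns in B and its rank is taken over ZMod d. Consequently the Schmidt measure E_S(ψ_Γ) = log_d r(ψ_Γ) is bounded below by the maximum over all bipartitions of the ZMod d-rank of the corresponding off-diagonal block of the adjacency matrix. -/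
open Module Matrix


lemma matrix_rank_add_le' {m n : Type*} [Fintype m] [Fintype n]
    (A B : Matrix m n ℂ) : (A + B).rank ≤ A.rank + B.rank := by
  classical
  have hle : LinearMap.range (A + B).mulVecLin ≤
      LinearMap.range A.mulVecLin ⊔ LinearMap.range B.mulVecLin := by
    rw [Matrix.mulVecLin_add]
    rintro _ ⟨x, rfl⟩
    exact Submodule.mem_sup.2 ⟨_, ⟨x, rfl⟩, _, ⟨x, rfl⟩, rfl⟩
  exact (Submodule.finrank_mono hle).trans
    (Submodule.finrank_add_le_finrank_add_finrank _ _)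

lemma matrix_rank_sum_le' {m n ι : Type*} [Fintype m] [Fintype n]
    (s : Finset ι) (f : ι → Matrix m n ℂ) :
    (∑ i ∈ s, f i).rank ≤ ∑ i ∈ s, (f i).rank := by
  classical
  induction s using Finset.cons_induction with
  | empty => simp
  | cons a s ha ih =>
      rw [Finset.sum_cons, Finset.sum_cons]
      exact (matrix_rank_add_le' _ _).trans (add_le_add le_rfl ih)

lemma matrix_rank_vecMulVec_le' {m n : Type*} [Fintype m] [Fintype n]
    (u : m → ℂ) (v : n → ℂ) : (Matrix.vecMulVec u v).rank ≤ 1 := by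
  classical
  rw [Matrix.vecMulVec_eq Unit]
  exact (Matrix.rank_mul_le_left _ _).trans
    ((Matrix.rank_le_card_width _).trans (by simp))

/-- For every bipartition `(A, Aᶜ)` of the sites, the Schmidt rank of the graph state is
bounded below by `d` raised to the `ZMod d`-rank of the corresponding off-diagonal block
of the adjacency matrix. -/
theorem schmidtRank_ge_rank_block
    (d n : ℕ) (hd : Nat.Prime d) (hn : 1 ≤ n)
    (ω : ℂ) (hω : IsPrimitiveRoot ω d)
    (Γ : Matrix (Fin n) (Fin n) (ZMod d)) (hΓsymm : Γ.IsSymm) (hΓdiag : ∀ u, Γ u u = 0)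
    (A : Finset (Fin n)) :
    d ^ Matrix.rank (Γ.submatrix (fun i : {u // u ∈ A} => (i : Fin n))
          (fun j : {u // u ∈ Aᶜ} => (j : Fin n)))
      ≤ schmidtRank (graphState d n ω Γ) := by
  classical
  haveI hfact : Fact (Nat.Prime d) := ⟨hd⟩
  haveI : NeZero d := ⟨hd.ne_zero⟩
  set ψ := graphState d n ω Γ with hψdef
  set c : ℂ := (((d : ℝ) ^ (-(n : ℝ) / 2) : ℝ) : ℂ) with hc
  have hcne : c ≠ 0 := by
    rw [hc]
    simp only [ne_eq, Complex.ofReal_eq_zero]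
    have hdpos : (0:ℝ) < d := by exact_mod_cast hd.pos
    exact ne_of_gt (Real.rpow_pos_of_pos hdpos _)
  set e : ZMod d → ℂ := fun k => ω ^ k.val with he
  have hmod : ∀ m : ℕ, ω ^ (m % d) = ω ^ m := by
    intro m
    conv_rhs => rw [← Nat.mod_add_div m d]
    rw [pow_add, pow_mul, hω.pow_eq_one, one_pow, mul_one]
  have he_add : ∀ x y : ZMod d, e (x + y) = e x * e y := by
    intro x y
    show ω ^ _ = _
    rw [ZMod.val_add, hmod, pow_add]
  have hωne : ω ≠ 0 := hω.ne_zero hd.ne_zero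
  have he_ne : ∀ x, e x ≠ 0 := fun x => pow_ne_zero _ hωne
  have he_zero : e 0 = 1 := by simp [he]
  have he_inj : Function.Injective e := by
    intro x y h
    exact ZMod.val_injective d (hω.pow_inj (ZMod.val_lt x) (ZMod.val_lt y) h)
  set N := Γ.submatrix (fun i : {u // u ∈ A} => (i : Fin n))
      (fun j : {u // u ∈ Aᶜ} => (j : Fin n)) with hN
  set merge : ({u // u ∈ A} → ZMod d) → ({u // u ∈ Aᶜ} → ZMod d) → Fin n → ZMod d :=
    fun a b u => if h : u ∈ A then a ⟨u, h⟩ else b ⟨u, Finset.mem_compl.mpr h⟩ with hmerge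
  have hma : ∀ a b (i : {u // u ∈ A}), merge a b (i : Fin n) = a i := fun a b i => dif_pos i.2
  have hmb : ∀ a b (j : {u // u ∈ Aᶜ}), merge a b (j : Fin n) = b j := by
    intro a b j
    have hj : (j : Fin n) ∉ A := Finset.mem_compl.mp j.2
    simp only [hmerge, dif_neg hj]
  set M : Matrix ({u // u ∈ A} → ZMod d) ({u // u ∈ Aᶜ} → ZMod d) ℂ :=
    fun a b => ψ (merge a b) with hM
  set S : (Fin n → ZMod d) → ZMod d :=
    fun x => ∑ u : Fin n, ∑ v : Fin n, if u < v then Γ u v * x u * x v else 0 with hS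
  have hψS : ∀ x, ψ x = c * e (S x) := fun x => rfl
  set qa : ({u // u ∈ A} → ZMod d) → ZMod d :=
    fun a => ∑ u ∈ A, ∑ v ∈ A, if u < v then Γ u v * merge a 0 u * merge a 0 v else 0 with hqa
  set qb : ({u // u ∈ Aᶜ} → ZMod d) → ZMod d :=
    fun b => ∑ u ∈ Aᶜ, ∑ v ∈ Aᶜ, if u < v then Γ u v * merge 0 b u * merge 0 b v else 0 with hqb
  have hsplit : ∀ a b, S (merge a b) = qa a + qb b + (a ⬝ᵥ (N *ᵥ b)) := by
    intro a b
    set x := merge a b with hx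
    set F : Fin n → Fin n → ZMod d :=
      fun u v => if u < v then Γ u v * x u * x v else 0 with hF
    have hxa : ∀ u (h : u ∈ A), x u = a ⟨u, h⟩ := fun u h => dif_pos h
    have hxb : ∀ u (h : u ∈ Aᶜ), x u = b ⟨u, h⟩ := by
      intro u h
      have hu : u ∉ A := Finset.mem_compl.mp h
      simp only [hx, hmerge, dif_neg hu]
    have hS4 : S x = ((∑ u ∈ A, ∑ v ∈ A, F u v) + (∑ u ∈ A, ∑ v ∈ Aᶜ, F u v))
        + ((∑ u ∈ Aᶜ, ∑ v ∈ A, F u v) + (∑ u ∈ Aᶜ, ∑ v ∈ Aᶜ, F u v)) := by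
      have h0 : S x = ∑ u : Fin n, ∑ v : Fin n, F u v := rfl
      rw [h0, ← Finset.sum_add_sum_compl A (fun u => ∑ v : Fin n, F u v)]
      congr 1
      · rw [← Finset.sum_add_distrib]
        exact Finset.sum_congr rfl fun u _ => (Finset.sum_add_sum_compl A _).symm
      · rw [← Finset.sum_add_distrib]
        exact Finset.sum_congr rfl fun u _ => (Finset.sum_add_sum_compl A _).symm
    have hTA : ∑ u ∈ A, ∑ v ∈ A, F u v = qa a := by
      refine Finset.sum_congr rfl fun u hu => Finset.sum_congr rfl fun v hv => ?_
      rw [hF]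
      simp only
      rw [hxa u hu, hxa v hv,
        show merge a 0 u = a ⟨u, hu⟩ from dif_pos hu,
        show merge a 0 v = a ⟨v, hv⟩ from dif_pos hv]
    have hTB : ∑ u ∈ Aᶜ, ∑ v ∈ Aᶜ, F u v = qb b := by
      refine Finset.sum_congr rfl fun u hu => Finset.sum_congr rfl fun v hv => ?_
      rw [hF]
      simp only
      rw [hxb u hu, hxb v hv,
        show merge 0 b u = b ⟨u, hu⟩ from by
          simp only [hmerge, dif_neg (Finset.mem_compl.mp hu)],
        show merge 0 b v = b ⟨v, hv⟩ from by
          simp only [hmerge, dif_neg (Finset.mem_compl.mp hv)]]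
    have hmix : (∑ u ∈ A, ∑ v ∈ Aᶜ, F u v) + (∑ u ∈ Aᶜ, ∑ v ∈ A, F u v)
        = a ⬝ᵥ (N *ᵥ b) := by
      rw [Finset.sum_comm (s := Aᶜ) (t := A), ← Finset.sum_add_distrib]
      have hptwise : ∀ u ∈ A, (∑ v ∈ Aᶜ, F u v) + (∑ v ∈ Aᶜ, F v u)
          = ∑ v ∈ Aᶜ, Γ u v * x u * x v := by
        intro u hu
        rw [← Finset.sum_add_distrib]
        refine Finset.sum_congr rfl fun v hv => ?_
        have hne' : u ≠ v := fun h => (Finset.mem_compl.mp hv) (h ▸ hu)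
        have hsym : Γ v u = Γ u v := hΓsymm.apply u v
        rw [hF]
        simp only
        rcases lt_or_gt_of_ne hne' with h | h
        · rw [if_pos h, if_neg (asymm h), add_zero]
        · rw [if_neg (asymm h), if_pos h, zero_add, hsym]
          ring
      rw [Finset.sum_congr rfl hptwise]
      have hdot : a ⬝ᵥ (N *ᵥ b)
          = ∑ i : {u // u ∈ A}, ∑ j : {u // u ∈ Aᶜ}, Γ i j * a i * b j := by
        simp only [dotProduct, Matrix.mulVec, hN, Matrix.submatrix_apply, Finset.mul_sum]
        exact Finset.sum_congr rfl fun i _ => Finset.sum_congr rfl fun j _ => by ring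
      rw [hdot, ← Finset.sum_coe_sort A (fun u => ∑ v ∈ Aᶜ, Γ u v * x u * x v)]
      refine Finset.sum_congr rfl fun i _ => ?_
      rw [← Finset.sum_coe_sort Aᶜ (fun v => Γ (i : Fin n) v * x i * x v)]
      refine Finset.sum_congr rfl fun j _ => ?_
      rw [hxa _ i.2, hxb _ j.2]
    rw [hS4, hTA, hTB, ← hmix]
    ring
  have hMeq : ∀ a b, M a b = c * (e (qa a) * (e (qb b) * e (a ⬝ᵥ (N *ᵥ b)))) := by
    intro a b
    rw [hM]
    show ψ (merge a b) = _
    rw [hψS, hsplit, he_add, he_add, mul_assoc]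
  have key1 : ∀ R : ℕ,
      (∃ f : Fin R → Fin n → ZMod d → ℂ, ∀ x, ψ x = ∑ i, ∏ j, f i j (x j)) → M.rank ≤ R := by
    rintro R ⟨f, hf⟩
    have hMsum : M = ∑ i : Fin R,
        Matrix.vecMulVec (fun a : {u // u ∈ A} → ZMod d => ∏ j : {u // u ∈ A}, f i j (a j))
          (fun b : {u // u ∈ Aᶜ} → ZMod d => ∏ j : {u // u ∈ Aᶜ}, f i j (b j)) := by
      ext a b
      rw [hM]
      simp only [Matrix.sum_apply, Matrix.vecMulVec_apply]
      rw [hf (merge a b)]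
      refine Finset.sum_congr rfl fun i _ => ?_
      rw [← Finset.prod_mul_prod_compl A (fun j => f i j (merge a b j))]
      congr 1
      · rw [← Finset.prod_coe_sort A (fun j => f i j (merge a b j))]
        exact Finset.prod_congr rfl fun j _ => by rw [hma]
      · rw [← Finset.prod_coe_sort Aᶜ (fun j => f i j (merge a b j))]
        exact Finset.prod_congr rfl fun j _ => by rw [hmb]
    calc M.rank ≤ ∑ i : Fin R,
        (Matrix.vecMulVec (fun a : {u // u ∈ A} → ZMod d => ∏ j : {u // u ∈ A}, f i j (a j))
          (fun b : {u // u ∈ Aᶜ} → ZMod d => ∏ j : {u // u ∈ Aᶜ}, f i j (b j))).rank := by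
          rw [hMsum]; exact matrix_rank_sum_le' _ _
      _ ≤ ∑ _i : Fin R, 1 :=
          Finset.sum_le_sum fun i _ => matrix_rank_vecMulVec_le' _ _
      _ = R := by simp
  have key2 : d ^ N.rank ≤ M.rank := by
    set G := Multiplicative ({u // u ∈ A} → ZMod d) with hG
    set φ : ({u // u ∈ A} → ZMod d) → (G →* ℂ) := fun cvec =>
      { toFun := fun a1 => e ((Multiplicative.toAdd a1) ⬝ᵥ cvec)
        map_one' := by
          show e ((0 : {u // u ∈ A} → ZMod d) ⬝ᵥ cvec) = 1
          rw [zero_dotProduct]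
          exact he_zero
        map_mul' := fun x y => by
          show e ((Multiplicative.toAdd x + Multiplicative.toAdd y) ⬝ᵥ cvec) = _
          rw [add_dotProduct, he_add] } with hφ
    have hφinj : Function.Injective φ := by
      intro c1 c2 h
      funext i
      have h2 := congrArg (fun g : G →* ℂ => g (Multiplicative.ofAdd (Pi.single i 1))) h
      simp only [hφ, MonoidHom.coe_mk, OneHom.coe_mk, toAdd_ofAdd] at h2
      have h3 := he_inj h2
      rwa [single_dotProduct, single_dotProduct, one_mul, one_mul] at h3
    have h1 : LinearIndependent ℂ (fun cvec => ((φ cvec : G → ℂ))) :=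
      (linearIndependent_monoidHom G ℂ).comp φ hφinj
    set D : (({u // u ∈ A} → ZMod d) → ℂ) →ₗ[ℂ] (({u // u ∈ A} → ZMod d) → ℂ) :=
      LinearMap.pi (fun a1 => e (qa a1) • LinearMap.proj a1) with hD
    have hDapp : ∀ v a1, D v a1 = e (qa a1) * v a1 := fun v a1 => rfl
    have hDker : LinearMap.ker D = ⊥ := by
      rw [LinearMap.ker_eq_bot']
      intro v hv
      funext a1
      have h4 : e (qa a1) * v a1 = 0 := by
        rw [← hDapp, hv]; rfl
      exact (mul_eq_zero.mp h4).resolve_left (he_ne _)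
    set χ : ({u // u ∈ A} → ZMod d) → (({u // u ∈ A} → ZMod d) → ℂ) :=
      fun cvec a1 => e (qa a1) * e (a1 ⬝ᵥ cvec) with hχ
    have hχindep : LinearIndependent ℂ χ := by
      have h5 : LinearIndependent ℂ (fun cvec => D ((φ cvec : G → ℂ))) :=
        h1.map' D hDker
      exact h5
    have hmemW : ∀ bvec : {u // u ∈ Aᶜ} → ZMod d,
        χ (N *ᵥ bvec) ∈ LinearMap.range M.mulVecLin := by
      intro bvec
      refine ⟨(c * e (qb bvec))⁻¹ • (Pi.single bvec 1 : ({u // u ∈ Aᶜ} → ZMod d) → ℂ), ?_⟩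
      rw [Matrix.mulVecLin_apply, Matrix.mulVec_smul, Matrix.mulVec_single]
      funext a1
      simp only [Pi.smul_apply, smul_eq_mul, mul_one, MulOpposite.op_one, one_smul, Matrix.col_apply]
      rw [hMeq a1 bvec]
      have h7 : c ≠ 0 := hcne
      have h8 : e (qb bvec) ≠ 0 := he_ne _
      field_simp
      ring
    set V := LinearMap.range N.mulVecLin with hV
    have hmemW' : ∀ cp : V, χ (cp : {u // u ∈ A} → ZMod d) ∈ LinearMap.range M.mulVecLin := by
      rintro ⟨cvec, bvec, rfl⟩
      exact hmemW bvec
    set v' : V → LinearMap.range M.mulVecLin := fun cp => ⟨χ cp, hmemW' cp⟩ with hv'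
    have hv'indep : LinearIndependent ℂ v' := by
      apply LinearIndependent.of_comp (LinearMap.range M.mulVecLin).subtype
      exact hχindep.comp (fun cp : V => (cp : {u // u ∈ A} → ZMod d)) Subtype.val_injective
    have hcard : Fintype.card V ≤ finrank ℂ (LinearMap.range M.mulVecLin) :=
      hv'indep.fintype_card_le_finrank
    have hcardV : Fintype.card V = d ^ N.rank := by
      rw [card_eq_pow_finrank (K := ZMod d) (V := V), ZMod.card]
      rfl
    have hMrank : M.rank = finrank ℂ (LinearMap.range M.mulVecLin) := rfl
    rw [hMrank, ← hcardV]
    exact hcard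
  have hne : {R : ℕ | ∃ f : Fin R → Fin n → ZMod d → ℂ,
      ∀ x, ψ x = ∑ i, ∏ j, f i j (x j)}.Nonempty := by
    refine ⟨Fintype.card (Fin n → ZMod d), ?_⟩
    set E := (Fintype.equivFin (Fin n → ZMod d)).symm with hE
    set j0 : Fin n := ⟨0, hn⟩ with hj0
    refine ⟨fun i j t => if t = E i j then (if j = j0 then ψ (E i) else 1) else 0, fun x => ?_⟩
    have hprod : ∀ y : Fin n → ZMod d,
        (∏ j, if x j = y j then (if j = j0 then ψ y else 1) else 0)
          = if x = y then ψ y else 0 := by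
      intro y
      by_cases hxy : x = y
      · subst hxy
        rw [if_pos rfl]
        have hstep : ∀ j : Fin n,
            (if x j = x j then (if j = j0 then ψ x else 1) else 0)
              = if j = j0 then ψ x else 1 := fun j => if_pos rfl
        rw [Finset.prod_congr rfl fun j _ => hstep j,
          Finset.prod_ite_eq' Finset.univ j0 (fun _ => ψ x)]
        simp
      · obtain ⟨j, hj⟩ := Function.ne_iff.mp hxy
        rw [if_neg hxy]
        exact Finset.prod_eq_zero (Finset.mem_univ j) (by rw [if_neg hj])
    calc ψ x = ∑ y : Fin n → ZMod d, if x = y then ψ y else 0 := by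
          rw [Finset.sum_ite_eq Finset.univ x ψ, if_pos (Finset.mem_univ x)]
      _ = ∑ i, ∏ j, if x j = E i j then (if j = j0 then ψ (E i) else 1) else 0 := by
          rw [← Equiv.sum_comp E (fun y => if x = y then ψ y else 0)]
          exact Finset.sum_congr rfl fun i _ => (hprod (E i)).symm
  have hmem : schmidtRank ψ ∈ {R : ℕ | ∃ f : Fin R → Fin n → ZMod d → ℂ,
      ∀ x, ψ x = ∑ i, ∏ j, f i j (x j)} := Nat.sInf_mem hne
  exact le_trans key2 (key1 _ hmem)
end

section
/- Let d be a prime, n ≥ 2, Γ a symmetric n×n matrix over ZMod d with zero diagonal, and k : Fin n a vertex. Let Γ' be the (n−1)×(n−1) matrix obtained from Γ by deleting row and column k (the adjacency matrix of the graph with vertex k removed). Then the Schmidt ranks of the corresponding graph states satisfy r(ψ_{Γ'}) ≤ r(ψ_Γ) ≤ d · r(ψ_{Γ'}). In particular, upon removal of a vertex the Schmidt measure E_S = log_d r can decrease by at most 1 and cannot increase. -/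
lemma chi_add {d : ℕ} [NeZero d] {ω : ℂ} (hω : ω ^ d = 1) (p q : ZMod d) :
    ω ^ (p + q).val = ω ^ p.val * ω ^ q.val := by
  rw [← pow_add, ZMod.val_add]
  conv_rhs => rw [← Nat.mod_add_div (p.val + q.val) d]
  rw [pow_add, pow_mul, hω, one_pow, mul_one]

lemma chi_sum {d : ℕ} [NeZero d] {ω : ℂ} (hω : ω ^ d = 1) {ι : Type*} (s : Finset ι)
    (g : ι → ZMod d) :
    ω ^ (∑ j ∈ s, g j).val = ∏ j ∈ s, ω ^ (g j).val := by
  classical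
  induction s using Finset.cons_induction with
  | empty => simp
  | cons a s ha ih => rw [Finset.sum_cons, chi_add hω, ih, Finset.prod_cons]

lemma quad_split {d n : ℕ} (Γ : Matrix (Fin (n+1)) (Fin (n+1)) (ZMod d))
    (hsymm : Γ.IsSymm) (k : Fin (n+1)) (x : Fin (n+1) → ZMod d) :
    (∑ u : Fin (n+1), ∑ v : Fin (n+1), if u < v then Γ u v * x u * x v else 0)
      = (∑ u : Fin n, ∑ v : Fin n, if u < v then
          Γ (k.succAbove u) (k.succAbove v) * x (k.succAbove u) * x (k.succAbove v) else 0)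
        + x k * ∑ j : Fin n, Γ k (k.succAbove j) * x (k.succAbove j) := by
  rw [Fin.sum_univ_succAbove (fun u => ∑ v : Fin (n+1),
        if u < v then Γ u v * x u * x v else 0) k]
  rw [Fin.sum_univ_succAbove (fun v => if k < v then Γ k v * x k * x v else 0) k]
  rw [Finset.sum_congr rfl (fun (u : Fin n) _ => Fin.sum_univ_succAbove
      (fun v => if k.succAbove u < v then Γ (k.succAbove u) v * x (k.succAbove u) * x v else 0) k)]
  simp only [lt_self_iff_false, if_false, zero_add, Finset.sum_add_distrib,
    Fin.succAbove_lt_succAbove_iff, Finset.mul_sum]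
  have hAB : ((∑ j : Fin n, if k < k.succAbove j then Γ k (k.succAbove j) * x k * x (k.succAbove j) else 0)
      + ∑ j : Fin n, if k.succAbove j < k then Γ (k.succAbove j) k * x (k.succAbove j) * x k else 0)
      = ∑ j : Fin n, x k * (Γ k (k.succAbove j) * x (k.succAbove j)) := by
    rw [← Finset.sum_add_distrib]
    refine Finset.sum_congr rfl fun j _ => ?_
    have hs : Γ (k.succAbove j) k = Γ k (k.succAbove j) := by
      have := congrFun (congrFun hsymm.eq k) (k.succAbove j)
      simpa [Matrix.transpose_apply] using this
    rcases (Fin.succAbove_ne k j).lt_or_gt with h | h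
    · rw [if_neg (not_lt.2 h.le), if_pos h, hs]; ring
    · rw [if_pos h, if_neg (not_lt.2 h.le)]; ring
  linear_combination hAB

lemma graphState_split {d n : ℕ} (hd : 0 < d) {ω : ℂ} (hω : ω ^ d = 1)
    (Γ : Matrix (Fin (n+1)) (Fin (n+1)) (ZMod d)) (hsymm : Γ.IsSymm) (k : Fin (n+1))
    (x : Fin (n+1) → ZMod d) :
    graphState d (n+1) ω Γ x
      = (((d:ℝ) ^ (-(1:ℝ)/2) : ℝ) : ℂ)
        * graphState d n ω (Γ.submatrix k.succAbove k.succAbove) (x ∘ k.succAbove)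
        * ω ^ (x k * ∑ j : Fin n, Γ k (k.succAbove j) * x (k.succAbove j)).val := by
  haveI : NeZero d := ⟨hd.ne'⟩
  unfold graphState
  rw [quad_split Γ hsymm k x, chi_add hω]
  have hc : ((d:ℝ) ^ (-((n+1 : ℕ) : ℝ)/2)) = (d:ℝ) ^ (-(1:ℝ)/2) * (d:ℝ) ^ (-(n:ℝ)/2) := by
    rw [← Real.rpow_add (by exact_mod_cast hd)]
    push_cast
    ring_nf
  rw [hc]
  simp only [Matrix.submatrix_apply, Function.comp_apply]
  push_cast
  ring

lemma decomp_nonempty {d m : ℕ} [NeZero d] (ψ : (Fin (m+1) → ZMod d) → ℂ) :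
    {R : ℕ | ∃ f : Fin R → Fin (m+1) → ZMod d → ℂ, ∀ x, ψ x = ∑ i, ∏ j, f i j (x j)}.Nonempty := by
  classical
  have hcard : Fintype.card (Fin (m+1) → ZMod d) = d ^ (m+1) := by simp [ZMod.card]
  let e : Fin (d^(m+1)) ≃ (Fin (m+1) → ZMod d) := (Fintype.equivFinOfCardEq hcard).symm
  refine ⟨d^(m+1), fun i j z => (if j = 0 then ψ (e i) else 1) * (if z = e i j then 1 else 0),
    fun x => ?_⟩
  have hprod : ∀ i, (∏ j, ((if j = 0 then ψ (e i) else 1) * (if x j = e i j then 1 else 0)))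
      = ψ (e i) * (if x = e i then 1 else 0) := by
    intro i
    rw [Finset.prod_mul_distrib]
    congr 1
    · simp
    · by_cases hx : x = e i
      · simp [hx]
      · rw [if_neg hx]
        obtain ⟨j, hj⟩ := Function.ne_iff.1 hx
        exact Finset.prod_eq_zero (Finset.mem_univ j) (by simp [hj])
  rw [Finset.sum_congr rfl fun i _ => hprod i,
    Equiv.sum_comp e (fun y => ψ y * (if x = y then 1 else 0))]
  simp

/-- Removing a vertex `k` from the graph (deleting row and column `k` of the adjacency
matrix) cannot increase the Schmidt rank of the graph state, and can decrease it by a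
factor of at most `d`; i.e., the Schmidt measure `E_S = log_d r` can decrease by at most
`1` and cannot increase. -/
theorem schmidtRank_vertex_removal
    (d n : ℕ) (hd : Nat.Prime d) (hn : 1 ≤ n)
    (ω : ℂ) (hω : IsPrimitiveRoot ω d)
    (Γ : Matrix (Fin (n + 1)) (Fin (n + 1)) (ZMod d)) (hΓsymm : Γ.IsSymm)
    (hΓdiag : ∀ u, Γ u u = 0) (k : Fin (n + 1)) :
    schmidtRank (graphState d n ω (Γ.submatrix k.succAbove k.succAbove))
        ≤ schmidtRank (graphState d (n + 1) ω Γ) ∧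
      schmidtRank (graphState d (n + 1) ω Γ)
        ≤ d * schmidtRank (graphState d n ω (Γ.submatrix k.succAbove k.succAbove)) := by
  classical
  obtain ⟨m, rfl⟩ : ∃ m, n = m + 1 := ⟨n - 1, by omega⟩
  have hd0 : 0 < d := hd.pos
  haveI : NeZero d := ⟨hd0.ne'⟩
  have hω1 : ω ^ d = 1 := hω.pow_eq_one
  set C : ℂ := (((d:ℝ) ^ (-(1:ℝ)/2) : ℝ) : ℂ) with hCdef
  have hC : C ≠ 0 := by
    simp only [hCdef, ne_eq, Complex.ofReal_eq_zero]
    positivity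
  set ψ := graphState d (m+1+1) ω Γ with hψdef
  set ψ' := graphState d (m+1) ω (Γ.submatrix k.succAbove k.succAbove) with hψ'def
  have hsplit : ∀ x, ψ x = C * ψ' (x ∘ k.succAbove)
      * ω ^ (x k * ∑ j : Fin (m+1), Γ k (k.succAbove j) * x (k.succAbove j)).val :=
    fun x => graphState_split hd0 hω1 Γ hΓsymm k x
  set A := {R : ℕ | ∃ f : Fin R → Fin (m+1+1) → ZMod d → ℂ, ∀ x, ψ x = ∑ i, ∏ j, f i j (x j)}
    with hAdef
  set B := {R : ℕ | ∃ f : Fin R → Fin (m+1) → ZMod d → ℂ, ∀ x, ψ' x = ∑ i, ∏ j, f i j (x j)}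
    with hBdef
  have hstep : ∀ R' ∈ B, d * R' ∈ A := by
    rintro R' ⟨f, hf⟩
    have hcard : Fintype.card (ZMod d × Fin R') = d * R' := by simp [ZMod.card]
    let e : Fin (d * R') ≃ ZMod d × Fin R' := (Fintype.equivFinOfCardEq hcard).symm
    refine ⟨fun t => (k.insertNth (fun z => C * if z = (e t).1 then 1 else 0)
      (fun j z => f (e t).2 j z * ω ^ ((e t).1 * (Γ k (k.succAbove j) * z)).val)
        : Fin (m+1+1) → ZMod d → ℂ), fun x => ?_⟩
    have key : ∀ t : Fin (d * R'),
        (∏ j, (k.insertNth (fun z => C * if z = (e t).1 then 1 else 0)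
          (fun j z => f (e t).2 j z * ω ^ ((e t).1 * (Γ k (k.succAbove j) * z)).val)
            : Fin (m+1+1) → ZMod d → ℂ) j (x j))
        = (C * if x k = (e t).1 then 1 else 0)
          * (ω ^ ((e t).1 * ∑ j : Fin (m+1), Γ k (k.succAbove j) * x (k.succAbove j)).val
             * ∏ j : Fin (m+1), f (e t).2 j (x (k.succAbove j))) := by
      intro t
      rw [Fin.prod_univ_succAbove (fun j => (k.insertNth (fun z => C * if z = (e t).1 then 1 else 0)
          (fun j z => f (e t).2 j z * ω ^ ((e t).1 * (Γ k (k.succAbove j) * z)).val)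
            : Fin (m+1+1) → ZMod d → ℂ) j (x j)) k]
      simp only [Fin.insertNth_apply_same, Fin.insertNth_apply_succAbove]
      rw [Finset.prod_mul_distrib, ← chi_sum hω1, ← Finset.mul_sum]
      ring
    rw [Finset.sum_congr rfl fun t _ => key t,
      Equiv.sum_comp e (fun p => (C * if x k = p.1 then 1 else 0)
        * (ω ^ (p.1 * ∑ j : Fin (m+1), Γ k (k.succAbove j) * x (k.succAbove j)).val
           * ∏ j : Fin (m+1), f p.2 j (x (k.succAbove j)))),
      Fintype.sum_prod_type]
    have hinner : ∀ a : ZMod d,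
        (∑ i : Fin R', (C * if x k = a then 1 else 0)
          * (ω ^ (a * ∑ j : Fin (m+1), Γ k (k.succAbove j) * x (k.succAbove j)).val
             * ∏ j : Fin (m+1), f i j (x (k.succAbove j))))
        = (if x k = a then 1 else 0) * (C
          * ω ^ (a * ∑ j : Fin (m+1), Γ k (k.succAbove j) * x (k.succAbove j)).val
          * ψ' (x ∘ k.succAbove)) := by
      intro a
      rw [hf (x ∘ k.succAbove)]
      simp only [Finset.mul_sum]
      refine Finset.sum_congr rfl fun i _ => ?_
      simp only [Function.comp_apply]
      ring
    rw [Finset.sum_congr rfl fun a _ => hinner a]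
    simp only [ite_mul, one_mul, zero_mul]
    rw [Finset.sum_ite_eq]
    simp only [Finset.mem_univ, if_true]
    rw [hsplit x]
    ring
  have hBne : B.Nonempty := decomp_nonempty ψ'
  have hAne : A.Nonempty := ⟨d * sInf B, hstep _ (Nat.sInf_mem hBne)⟩
  constructor
  · show sInf B ≤ sInf A
    apply Nat.sInf_le
    obtain ⟨f, hf⟩ := Nat.sInf_mem hAne
    refine ⟨fun i j z => (if j = 0 then C⁻¹ * f i k 0 else 1) * f i (k.succAbove j) z,
      fun x' => ?_⟩
    have hcomp : (k.insertNth (0 : ZMod d) x') ∘ k.succAbove = x' :=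
      funext fun j => by simp
    have hx : ψ (k.insertNth (0 : ZMod d) x') = C * ψ' x' := by
      rw [hsplit, hcomp]
      simp
    have h2 := hf (k.insertNth (0 : ZMod d) x')
    have h3 : ∀ i : Fin (sInf A),
        (∏ j, f i j ((k.insertNth (0 : ZMod d) x' : Fin (m+1+1) → ZMod d) j))
          = f i k 0 * ∏ j : Fin (m+1), f i (k.succAbove j) (x' j) := by
      intro i
      rw [Fin.prod_univ_succAbove (fun j => f i j ((k.insertNth (0 : ZMod d) x' : Fin (m+1+1) → ZMod d) j)) k]
      simp
    rw [Finset.sum_congr rfl fun i _ => h3 i] at h2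
    have h4 : ∀ i : Fin (sInf A),
        (∏ j : Fin (m+1), ((if j = 0 then C⁻¹ * f i k 0 else 1) * f i (k.succAbove j) (x' j)))
          = C⁻¹ * (f i k 0 * ∏ j : Fin (m+1), f i (k.succAbove j) (x' j)) := by
      intro i
      rw [Finset.prod_mul_distrib]
      have : (∏ j : Fin (m+1), if j = 0 then C⁻¹ * f i k 0 else 1) = C⁻¹ * f i k 0 := by simp
      rw [this]; ring
    show ψ' x' = ∑ i : Fin (sInf A), ∏ j : Fin (m+1),
      ((if j = 0 then C⁻¹ * f i k 0 else 1) * f i (k.succAbove j) (x' j))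
    rw [Finset.sum_congr rfl fun i _ => h4 i, ← Finset.mul_sum, ← h2, hx]
    field_simp
  · show sInf A ≤ d * sInf B
    exact Nat.sInf_le (hstep _ (Nat.sInf_mem hBne))
end

section
/- Let d be a prime, n ≥ 1, and Γ a symmetric n×n matrix over ZMod d with zero diagonal. Suppose S ⊆ Fin n is an independent set of the associated weighted graph, i.e., Γ u v = 0 for all u, v ∈ S. Then the Schmidt rank of the graph state satisfies r(ψ_Γ) ≤ d ^ (n − |S|). In particular, if the weighted graph is three-colorable with color classes of sizes n₁ ≤ n₂ ≤ n₃, then the graph state has a product decomposition with at most d^(n₁+n₂) terms, so E_S(ψ_Γ) ≤ n₁ + n₂. -/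
theorem aux_bound
    (d n : ℕ) (hd : Nat.Prime d) (hn : 1 ≤ n)
    (ω : ℂ) (hω : IsPrimitiveRoot ω d)
    (Γ : Matrix (Fin n) (Fin n) (ZMod d)) (hΓsymm : Γ.IsSymm)
    (S : Finset (Fin n)) (hS : ∀ u ∈ S, ∀ v ∈ S, Γ u v = 0) :
    schmidtRank (graphState d n ω Γ) ≤ d ^ (n - S.card) := by
  classical
  haveI : NeZero d := ⟨hd.ne_zero⟩
  set χ : ZMod d → ℂ := fun a => ω ^ a.val with hχ
  have hωd : ω ^ d = 1 := hω.pow_eq_one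
  have hχmod : ∀ m : ℕ, ω ^ (m % d) = ω ^ m := by
    intro m
    conv_rhs => rw [← Nat.mod_add_div m d]
    rw [pow_add, pow_mul, hωd, one_pow, mul_one]
  have hχadd : ∀ a b : ZMod d, χ (a + b) = χ a * χ b := by
    intro a b
    simp only [hχ, ZMod.val_add, hχmod, pow_add]
  have hχzero : χ 0 = 1 := by simp [hχ, ZMod.val_zero]
  have hχsum : ∀ (s : Finset (Fin n)) (g : Fin n → ZMod d),
      χ (∑ i ∈ s, g i) = ∏ i ∈ s, χ (g i) := by
    intro s g
    induction s using Finset.cons_induction with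
    | empty => simpa using hχzero
    | cons a s ha ih => rw [Finset.sum_cons, Finset.prod_cons, hχadd, ih]
  set C : ℂ := (((d : ℝ) ^ (-(n : ℝ) / 2) : ℝ) : ℂ) with hC
  set j0 : Fin n := ⟨0, hn⟩ with hj0
  set T : Finset (Fin n) := Sᶜ with hT
  set QT : ((↥T) → ZMod d) → ZMod d := fun y =>
    ∑ u : ↥T, ∑ v : ↥T,
      if (u : Fin n) < (v : Fin n) then Γ u v * y u * y v else 0 with hQT
  set A : Fin n → ((↥T) → ZMod d) → ZMod d := fun j y =>
    ∑ v : ↥T, Γ j v * y v with hA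
  set F : ((↥T) → ZMod d) → Fin n → ZMod d → ℂ := fun y j t =>
    (if j = j0 then C * χ (QT y) else 1) *
    (if h : j ∈ T then (if t = y ⟨j, h⟩ then 1 else 0) else χ (t * A j y)) with hF
  have key : ∀ x, graphState d n ω Γ x = ∑ y : (↥T) → ZMod d, ∏ j, F y j (x j) := by
    intro x
    set y₀ : (↥T) → ZMod d := fun v => x v with hy₀
    -- compute the product for each y
    have hprod : ∀ y : (↥T) → ZMod d, (∏ j, F y j (x j)) =
        (if y = y₀ then (1:ℂ) else 0) * ((C * χ (QT y)) * ∏ j ∈ S, χ (x j * A j y)) := by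
      intro y
      rw [hF]
      simp only []
      rw [Finset.prod_mul_distrib]
      have h1 : (∏ j : Fin n, (if j = j0 then C * χ (QT y) else 1)) = C * χ (QT y) := by
        rw [Finset.prod_ite_eq' Finset.univ j0 (fun _ => C * χ (QT y))]
        simp
      have h2 : (∏ j : Fin n,
            (if h : j ∈ T then (if x j = y ⟨j, h⟩ then (1:ℂ) else 0) else χ (x j * A j y))) =
          ((if y = y₀ then (1:ℂ) else 0) * ∏ j ∈ S, χ (x j * A j y)) := by
        rw [← Finset.prod_mul_prod_compl S, ← hT]
        have hSpart : (∏ j ∈ S,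
            (if h : j ∈ T then (if x j = y ⟨j, h⟩ then (1:ℂ) else 0) else χ (x j * A j y))) =
            ∏ j ∈ S, χ (x j * A j y) := by
          refine Finset.prod_congr rfl fun j hj => ?_
          rw [dif_neg (by simp [hT, hj])]
        have hTpart : (∏ j ∈ T,
            (if h : j ∈ T then (if x j = y ⟨j, h⟩ then (1:ℂ) else 0) else χ (x j * A j y))) =
            if y = y₀ then (1:ℂ) else 0 := by
          rw [← Finset.prod_attach T
            (fun j => if h : j ∈ T then (if x j = y ⟨j, h⟩ then (1:ℂ) else 0) else χ (x j * A j y))]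
          have : ∀ v : ↥T, (if h : (v : Fin n) ∈ T
              then (if x v = y ⟨v, h⟩ then (1:ℂ) else 0) else χ (x v * A v y)) =
              (if x v = y v then (1:ℂ) else 0) := by
            intro v
            rw [dif_pos v.2]
          rw [Finset.prod_congr rfl fun v _ => this v]
          by_cases hy : y = y₀
          · subst hy
            simp [hy₀]
          · have : ∃ v : ↥T, y v ≠ y₀ v := by
              by_contra hcon
              push_neg at hcon
              exact hy (funext hcon)
            obtain ⟨v, hv⟩ := this
            rw [if_neg hy]
            refine Finset.prod_eq_zero (Finset.mem_attach _ v) ?_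
            rw [if_neg]
            exact fun h => hv h.symm
        rw [hSpart, hTpart, mul_comm]
      rw [h1, h2]
      ring
    rw [Finset.sum_congr rfl fun y _ => hprod y]
    simp only [ite_mul, one_mul, zero_mul]
    rw [Finset.sum_ite_eq' Finset.univ y₀
      (fun y => (C * χ (QT y)) * ∏ j ∈ S, χ (x j * A j y))]
    rw [if_pos (Finset.mem_univ _)]
    -- now the algebraic identity
    have hsplit : (∑ u : Fin n, ∑ v : Fin n, if u < v then Γ u v * x u * x v else 0)
        = QT y₀ + ∑ j ∈ S, x j * A j y₀ := by
      set t : Fin n → Fin n → ZMod d := fun u v => if u < v then Γ u v * x u * x v else 0 with ht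
      have hAeq : ∀ u : Fin n, (∑ v : Fin n, t u v)
          = (∑ v ∈ S, t u v) + ∑ v ∈ T, t u v :=
        fun u => (Finset.sum_add_sum_compl S (t u)).symm
      calc (∑ u : Fin n, ∑ v : Fin n, t u v)
          = (∑ u ∈ S, ((∑ v ∈ S, t u v) + ∑ v ∈ T, t u v))
            + ∑ u ∈ T, ((∑ v ∈ S, t u v) + ∑ v ∈ T, t u v) := by
            rw [← Finset.sum_add_sum_compl S (fun u => ∑ v : Fin n, t u v), ← hT]
            rw [Finset.sum_congr rfl fun u _ => hAeq u, Finset.sum_congr rfl fun u _ => hAeq u]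
        _ = ((∑ u ∈ S, ∑ v ∈ S, t u v) + ∑ u ∈ S, ∑ v ∈ T, t u v)
            + ((∑ u ∈ T, ∑ v ∈ S, t u v) + ∑ u ∈ T, ∑ v ∈ T, t u v) := by
            rw [Finset.sum_add_distrib, Finset.sum_add_distrib]
        _ = QT y₀ + ∑ j ∈ S, x j * A j y₀ := by
            have e1 : (∑ u ∈ S, ∑ v ∈ S, t u v) = 0 := by
              refine Finset.sum_eq_zero fun u hu => Finset.sum_eq_zero fun v hv => ?_
              simp [ht, hS u hu v hv]
            have e4 : (∑ u ∈ T, ∑ v ∈ T, t u v) = QT y₀ := by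
              rw [hQT]
              simp only [hy₀]
              rw [← Finset.sum_coe_sort T (fun u => ∑ v ∈ T, t u v)]
              refine Finset.sum_congr rfl fun u _ => ?_
              rw [← Finset.sum_coe_sort T (fun v => t u v)]
            have e23 : ((∑ u ∈ S, ∑ v ∈ T, t u v) + ∑ u ∈ T, ∑ v ∈ S, t u v)
                = ∑ j ∈ S, x j * A j y₀ := by
              rw [Finset.sum_comm (s := T) (t := S)]
              rw [← Finset.sum_add_distrib]
              refine Finset.sum_congr rfl fun j hj => ?_
              rw [← Finset.sum_add_distrib]
              have hAj : x j * A j y₀ = ∑ v ∈ T, x j * (Γ j v * x v) := by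
                rw [hA]
                simp only [hy₀]
                rw [Finset.mul_sum]
                rw [← Finset.sum_coe_sort T (fun v => x j * (Γ j v * x v))]
              rw [hAj]
              refine Finset.sum_congr rfl fun v hv => ?_
              have hne : j ≠ v := by
                intro h; subst h
                rw [hT, Finset.mem_compl] at hv
                exact hv hj
              rcases lt_trichotomy j v with hlt | heq | hgt
              · rw [ht]
                simp only [if_pos hlt, if_neg (asymm hlt)]
                ring
              · exact absurd heq hne
              · rw [ht]
                simp only [if_neg (asymm hgt), if_pos hgt]
                rw [hΓsymm.apply]
                ring
            rw [e1, e4, zero_add, ← add_assoc] at *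
            rw [e23]
            ring
    rw [graphState, hsplit]
    show C * χ (QT y₀ + ∑ j ∈ S, x j * A j y₀) = _
    rw [hχadd, hχsum]
    ring
  -- cardinality
  have hcard : Fintype.card ((↥T) → ZMod d) = d ^ (n - S.card) := by
    rw [Fintype.card_fun, ZMod.card, Fintype.card_coe, hT, Finset.card_compl,
      Fintype.card_fin]
  let e : Fin (d ^ (n - S.card)) ≃ ((↥T) → ZMod d) := (Fintype.equivFinOfCardEq hcard).symm
  refine Nat.sInf_le ⟨fun i => F (e i), fun x => ?_⟩
  rw [key x, ← Equiv.sum_comp e (fun y => ∏ j, F y j (x j))]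

/-- If `S` is an independent set of the weighted graph of `Γ`, then the Schmidt rank of
the graph state is at most `d ^ (n - |S|)`. In particular, if the graph is
three-colorable with color classes of sizes `n₁ ≤ n₂ ≤ n₃`, the graph state has a
product decomposition with at most `d^(n₁+n₂)` terms, so `E_S ≤ n₁ + n₂`. -/
theorem schmidtRank_le_of_independent
    (d n : ℕ) (hd : Nat.Prime d) (hn : 1 ≤ n)
    (ω : ℂ) (hω : IsPrimitiveRoot ω d)
    (Γ : Matrix (Fin n) (Fin n) (ZMod d)) (hΓsymm : Γ.IsSymm) (hΓdiag : ∀ u, Γ u u = 0)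
    (S : Finset (Fin n)) (hS : ∀ u ∈ S, ∀ v ∈ S, Γ u v = 0) :
    schmidtRank (graphState d n ω Γ) ≤ d ^ (n - S.card) ∧
      ∀ (c : Fin n → Fin 3) (n₁ n₂ n₃ : ℕ),
        (∀ u v : Fin n, c u = c v → Γ u v = 0) →
        n₁ ≤ n₂ → n₂ ≤ n₃ →
        Multiset.map (fun i => (Finset.univ.filter fun v => c v = i).card)
            (Finset.univ : Finset (Fin 3)).val = {n₁, n₂, n₃} →
        schmidtRank (graphState d n ω Γ) ≤ d ^ (n₁ + n₂) := by
  refine ⟨aux_bound d n hd hn ω hω Γ hΓsymm S hS, ?_⟩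
  intro c n₁ n₂ n₃ hc h12 h23 hms
  have htot : n₁ + n₂ + n₃ = n := by
    have h1 : ((Finset.univ : Finset (Fin 3)).val.map
        fun i => (Finset.univ.filter fun v => c v = i).card).sum
        = ({n₁, n₂, n₃} : Multiset ℕ).sum := by rw [hms]
    have h2 : ((Finset.univ : Finset (Fin 3)).val.map
        fun i => (Finset.univ.filter fun v => c v = i).card).sum
        = ∑ i : Fin 3, (Finset.univ.filter fun v => c v = i).card := rfl
    have h3 : (∑ i : Fin 3, (Finset.univ.filter fun v => c v = i).card) = n := by
      rw [← Finset.card_eq_sum_card_fiberwise (fun x _ => Finset.mem_univ (c x))]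
      simp
    have h4 : ({n₁, n₂, n₃} : Multiset ℕ).sum = n₁ + n₂ + n₃ := by
      simp [add_assoc]
    omega
  have h3mem : (n₃ : ℕ) ∈ ({n₁, n₂, n₃} : Multiset ℕ) := by simp
  rw [← hms] at h3mem
  obtain ⟨i, -, hi⟩ := Multiset.mem_map.mp h3mem
  have hb := aux_bound d n hd hn ω hω Γ hΓsymm (Finset.univ.filter fun v => c v = i)
    (fun u hu v hv => hc u v (by
      simp only [Finset.mem_filter, Finset.mem_univ, true_and] at hu hv
      rw [hu, hv]))
  rw [hi] at hb
  have : n - n₃ = n₁ + n₂ := by omega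
  rwa [this] at hb
end
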